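/- arXiv:2305.02764 — 7 statements merged into one kernel-verified Lean document; each statement's English description precedes it below -/
import Mathlib

section
/- If A is an M-matrix, B is a Z-matrix, and A ≤ B entrywise, then B is an M-matrix. -/
open Matrix BigOperators Filter

/-- Componentwise absolute value of a vector. -/
def vecAbs {n : ℕ} (v : Fin n → ℝ) : Fin n → ℝ := fun i => |v i|

/-- Entrywise absolute value of a matrix. -/
def matAbs {n : ℕ} (A : Matrix (Fin n) (Fin n) ℝ) : Matrix (Fin n) (Fin n) ℝ :=
  Matrix.of fun i j => |A i j|

/-- A Z-matrix: off-diagonal entries are nonpositive. -/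
def IsZMatrix {n : ℕ} (A : Matrix (Fin n) (Fin n) ℝ) : Prop :=
  ∀ i j, i ≠ j → A i j ≤ 0

/-- An M-matrix: a Z-matrix that is invertible with entrywise nonnegative inverse. -/
def IsMMatrix {n : ℕ} (A : Matrix (Fin n) (Fin n) ℝ) : Prop :=
  IsZMatrix A ∧ IsUnit A.det ∧ ∀ i j, 0 ≤ A⁻¹ i j

/-- The comparison matrix ⟨A⟩. -/
def cmpMatrix {n : ℕ} (A : Matrix (Fin n) (Fin n) ℝ) : Matrix (Fin n) (Fin n) ℝ :=
  Matrix.of fun i j => if i = j then |A i j| else -|A i j|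

/-- An H-matrix: its comparison matrix is an M-matrix. -/
def IsHMatrix {n : ℕ} (A : Matrix (Fin n) (Fin n) ℝ) : Prop :=
  IsMMatrix (cmpMatrix A)

/-- An H₊-matrix: an H-matrix with positive diagonal entries. -/
def IsHPlusMatrix {n : ℕ} (A : Matrix (Fin n) (Fin n) ℝ) : Prop :=
  IsHMatrix A ∧ ∀ i, 0 < A i i

/-- A P-matrix: all principal minors are positive. -/
def IsPMatrix {n : ℕ} (A : Matrix (Fin n) (Fin n) ℝ) : Prop :=
  ∀ s : Finset (Fin n),
    0 < (A.submatrix (fun i : s => (i : Fin n)) (fun i : s => (i : Fin n))).det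

/-- Spectral radius: supremum of the moduli of the (complex) eigenvalues. -/
noncomputable def specRad {n : ℕ} (A : Matrix (Fin n) (Fin n) ℝ) : ℝ :=
  sSup {x : ℝ | ∃ μ : ℂ, (A.map (Complex.ofReal)).charpoly.IsRoot μ ∧ x = ‖μ‖}

/-- Strictly lower triangular part of a matrix. -/
def strictLower {n : ℕ} (A : Matrix (Fin n) (Fin n) ℝ) : Matrix (Fin n) (Fin n) ℝ :=
  Matrix.of fun i j => if (j : ℕ) < (i : ℕ) then A i j else 0

/-- Strictly upper triangular part of a matrix. -/
def strictUpper {n : ℕ} (A : Matrix (Fin n) (Fin n) ℝ) : Matrix (Fin n) (Fin n) ℝ :=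
  Matrix.of fun i j => if (i : ℕ) < (j : ℕ) then A i j else 0

/-- A positive diagonal matrix. -/
def posDiag {n : ℕ} (Ω : Matrix (Fin n) (Fin n) ℝ) : Prop :=
  (∀ i j, i ≠ j → Ω i j = 0) ∧ ∀ i, 0 < Ω i i

section AuxMMatrix

open scoped NNReal

attribute [local instance] Matrix.linftyOpNormedRing Matrix.linftyOpNormedSpace

variable {n : ℕ}

private lemma entry_nnnorm_le' (A : Matrix (Fin n) (Fin n) ℝ) (i j : Fin n) :
    ‖A i j‖₊ ≤ ‖A‖₊ := by
  rw [Matrix.linfty_opNNNorm_def]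
  exact le_trans
    (Finset.single_le_sum (f := fun j => ‖A i j‖₊) (fun _ _ => zero_le) (Finset.mem_univ j))
    (Finset.le_sup (f := fun i => ∑ j : Fin n, ‖A i j‖₊) (Finset.mem_univ i))

/-- The entry map as a continuous linear map (w.r.t. the linfty operator norm). -/
private noncomputable def entryCLM (i j : Fin n) : Matrix (Fin n) (Fin n) ℝ →L[ℝ] ℝ :=
  LinearMap.mkContinuous
    { toFun := fun A => A i j, map_add' := fun _ _ => rfl, map_smul' := fun _ _ => rfl }
    1 (fun A => by
      show ‖A i j‖ ≤ 1 * ‖A‖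
      simpa using (NNReal.coe_le_coe.mpr (entry_nnnorm_le' A i j) : ‖A i j‖ ≤ ‖A‖))

private lemma pow_entry_nonneg {N : Matrix (Fin n) (Fin n) ℝ}
    (hN : ∀ i j, 0 ≤ N i j) : ∀ (k : ℕ) (i j : Fin n), 0 ≤ (N ^ k) i j := by
  intro k
  induction k with
  | zero =>
    intro i j
    simp only [pow_zero, Matrix.one_apply]
    split <;> norm_num
  | succ m ih =>
    intro i j
    rw [pow_succ, Matrix.mul_apply]
    exact Finset.sum_nonneg fun l _ => mul_nonneg (ih i l) (hN l j)

/-- A strictly diagonally dominant Z-matrix (with positive diagonal) is an M-matrix. -/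
private lemma sdd_Mmatrix (M : Matrix (Fin n) (Fin n) ℝ)
    (hZ : ∀ i j, i ≠ j → M i j ≤ 0)
    (hdom : ∀ i, ∑ j ∈ Finset.univ.erase i, |M i j| < M i i) :
    IsUnit M.det ∧ ∀ i j, 0 ≤ M⁻¹ i j := by
  have hMpos : ∀ i, 0 < M i i := fun i =>
    lt_of_le_of_lt (Finset.sum_nonneg fun j _ => abs_nonneg _) (hdom i)
  set E : Matrix (Fin n) (Fin n) ℝ := Matrix.diagonal fun i => M i i with hE
  set E' : Matrix (Fin n) (Fin n) ℝ := Matrix.diagonal fun i => (M i i)⁻¹ with hE'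
  have hEE' : E * E' = 1 := by
    rw [hE, hE', Matrix.diagonal_mul_diagonal]
    ext i j
    by_cases h : i = j
    · subst h; simp [mul_inv_cancel₀ (hMpos i).ne']
    · simp [Matrix.diagonal_apply_ne _ h, Matrix.one_apply_ne h]
  set N : Matrix (Fin n) (Fin n) ℝ := 1 - E' * M with hNdef
  have hE'M : ∀ i j, (E' * M) i j = (M i i)⁻¹ * M i j := fun i j => by
    rw [hE', Matrix.diagonal_mul]
  have hNentry : ∀ i j, N i j = if i = j then 0 else -((M i i)⁻¹ * M i j) := by
    intro i j
    rw [hNdef, Matrix.sub_apply, hE'M, Matrix.one_apply]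
    by_cases h : i = j
    · subst h; simp [inv_mul_cancel₀ (hMpos i).ne']
    · simp [h]
  have hNnonneg : ∀ i j, 0 ≤ N i j := by
    intro i j
    rw [hNentry]
    by_cases h : i = j
    · simp [h]
    · simp only [h, if_false, neg_nonneg]
      exact mul_nonpos_of_nonneg_of_nonpos (inv_nonneg.mpr (hMpos i).le) (hZ i j h)
  have hNnorm : ‖N‖ < 1 := by
    have h1 : (‖N‖₊ : ℝ) < 1 := by
      rw [Matrix.linfty_opNNNorm_def]
      have : (Finset.univ.sup fun i => ∑ j, ‖N i j‖₊) < 1 := by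
        rw [Finset.sup_lt_iff (by norm_num : (⊥ : ℝ≥0) < 1)]
        intro i _
        rw [← NNReal.coe_lt_coe]
        push_cast
        have hsum : ∑ j, ‖N i j‖ = (M i i)⁻¹ * ∑ j ∈ Finset.univ.erase i, |M i j| := by
          rw [Finset.mul_sum,
            ← Finset.add_sum_erase _ (fun j => ‖N i j‖) (Finset.mem_univ i)]
          have h0 : ‖N i i‖ = 0 := by rw [Real.norm_eq_abs, hNentry]; simp
          rw [h0, zero_add]
          apply Finset.sum_congr rfl
          intro j hj
          have hij : i ≠ j := fun h => (Finset.mem_erase.mp hj).1 h.symm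
          rw [Real.norm_eq_abs, hNentry, if_neg hij, abs_neg, abs_mul,
            abs_of_nonneg (inv_nonneg.mpr (hMpos i).le)]
        calc ∑ j, ‖N i j‖ = (M i i)⁻¹ * ∑ j ∈ Finset.univ.erase i, |M i j| := hsum
          _ < (M i i)⁻¹ * M i i :=
            (mul_lt_mul_iff_right₀ (inv_pos.mpr (hMpos i))).mpr (hdom i)
          _ = 1 := inv_mul_cancel₀ (hMpos i).ne'
      exact_mod_cast this
    simpa [coe_nnnorm] using h1
  set S : Matrix (Fin n) (Fin n) ℝ := ∑' k : ℕ, N ^ k with hS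
  have hval_inv : (1 - N) * S = 1 := (Units.oneSub N hNnorm).val_inv
  have hSnonneg : ∀ i j, 0 ≤ S i j := by
    intro i j
    have hsummable : Summable fun k : ℕ => N ^ k := summable_geometric_of_norm_lt_one hNnorm
    have : S i j = ∑' k : ℕ, (N ^ k) i j := by
      have := (entryCLM i j).map_tsum hsummable
      exact this
    rw [this]
    exact tsum_nonneg fun k => pow_entry_nonneg hNnonneg k i j
  have h1N : (1 : Matrix (Fin n) (Fin n) ℝ) - N = E' * M := by
    rw [hNdef, sub_sub_cancel]
  have hMR : M * (S * E') = 1 := by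
    have h2 : E' * (M * S) = 1 := by
      rw [← Matrix.mul_assoc, ← h1N]; exact hval_inv
    have h3 : M * S = E := by
      calc M * S = (E * E') * (M * S) := by rw [hEE', Matrix.one_mul]
        _ = E * (E' * (M * S)) := by rw [Matrix.mul_assoc]
        _ = E := by rw [h2, Matrix.mul_one]
    rw [← Matrix.mul_assoc, h3, hEE']
  refine ⟨Matrix.isUnit_det_of_right_inverse hMR, ?_⟩
  intro i j
  rw [Matrix.inv_eq_right_inv hMR]
  rw [hE', Matrix.mul_diagonal]
  exact mul_nonneg (hSnonneg i j) (inv_nonneg.mpr (hMpos j).le)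

end AuxMMatrix

theorem stmt3 {n : ℕ} (A B : Matrix (Fin n) (Fin n) ℝ)
    (hA : IsMMatrix A) (hB : IsZMatrix B) (hle : ∀ i j, A i j ≤ B i j) :
    IsMMatrix B := by
  obtain ⟨hAZ, hAdet, hAinv⟩ := hA
  set x : Fin n → ℝ := A⁻¹ *ᵥ (fun _ => 1) with hx
  have hxnonneg : ∀ i, 0 ≤ x i := by
    intro i
    rw [hx]
    simp only [Matrix.mulVec, dotProduct]
    exact Finset.sum_nonneg fun j _ => by simpa using hAinv i j
  have hAx : A *ᵥ x = fun _ => 1 := by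
    rw [hx, Matrix.mulVec_mulVec, Matrix.mul_nonsing_inv A hAdet, Matrix.one_mulVec]
  have hxpos : ∀ i, 0 < x i := by
    intro i
    rcases lt_or_eq_of_le (hxnonneg i) with h | h
    · exact h
    · exfalso
      have hrow : ∀ j, A⁻¹ i j = 0 := by
        have hz : ∑ j, A⁻¹ i j * 1 = 0 := by
          have : x i = 0 := h.symm
          simpa [hx, Matrix.mulVec, dotProduct] using this
        intro j
        have := (Finset.sum_eq_zero_iff_of_nonneg
          (fun j _ => by simpa using hAinv i j)).mp (by simpa using hz) j (Finset.mem_univ j)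
        simpa using this
      have h1 : (A⁻¹ * A) i i = 0 := by
        rw [Matrix.mul_apply]
        exact Finset.sum_eq_zero fun j _ => by rw [hrow j, zero_mul]
      rw [Matrix.nonsing_inv_mul A hAdet] at h1
      simp at h1
  set M : Matrix (Fin n) (Fin n) ℝ := B * Matrix.diagonal x with hM
  have hMentry : ∀ i j, M i j = B i j * x j := fun i j => by
    rw [hM, Matrix.mul_diagonal]
  have hMZ : ∀ i j, i ≠ j → M i j ≤ 0 := fun i j hij => by
    rw [hMentry]
    exact mul_nonpos_of_nonpos_of_nonneg (hB i j hij) (hxnonneg j)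
  have hBx : ∀ i, (1 : ℝ) ≤ ∑ j, M i j := by
    intro i
    have h1 : ∑ j, A i j * x j ≤ ∑ j, M i j := by
      apply Finset.sum_le_sum
      intro j _
      rw [hMentry]
      exact mul_le_mul_of_nonneg_right (hle i j) (hxnonneg j)
    have h2 : ∑ j, A i j * x j = 1 := by
      have := congrFun hAx i
      simpa [Matrix.mulVec, dotProduct] using this
    linarith
  have hdom : ∀ i, ∑ j ∈ Finset.univ.erase i, |M i j| < M i i := by
    intro i
    have habs : ∀ j ∈ Finset.univ.erase i, |M i j| = -M i j := by
      intro j hj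
      have hij : i ≠ j := fun h => (Finset.mem_erase.mp hj).1 h.symm
      exact abs_of_nonpos (hMZ i j hij)
    rw [Finset.sum_congr rfl habs]
    have hsplit : M i i + ∑ j ∈ Finset.univ.erase i, M i j = ∑ j, M i j :=
      Finset.add_sum_erase _ _ (Finset.mem_univ i)
    have := hBx i
    have hsum : ∑ j ∈ Finset.univ.erase i, -M i j = -∑ j ∈ Finset.univ.erase i, M i j := by
      rw [Finset.sum_neg_distrib]
    linarith
  obtain ⟨hMdet, hMinv⟩ := sdd_Mmatrix M hMZ hdom

  have hBR : B * (Matrix.diagonal x * M⁻¹) = 1 := by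
    rw [← Matrix.mul_assoc, ← hM, Matrix.mul_nonsing_inv M hMdet]
  refine ⟨hB, Matrix.isUnit_det_of_right_inverse hBR, ?_⟩
  intro i j
  rw [Matrix.inv_eq_right_inv hBR, Matrix.diagonal_mul]
  exact mul_nonneg (hxpos i).le (hMinv i j)
end

section
/- If A is an H-matrix, then A is invertible and |A^{-1}| ≤ ⟨A⟩^{-1} entrywise, where ⟨A⟩ is the comparison matrix of A. -/
open Matrix BigOperators Filter

-- key lemma
lemma key_lemma {n : ℕ} (A : Matrix (Fin n) (Fin n) ℝ) (x : Fin n → ℝ) (i : Fin n) :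
    (cmpMatrix A *ᵥ vecAbs x) i ≤ |(A *ᵥ x) i| := by
  have hsplit : (A *ᵥ x) i = A i i * x i + ∑ k ∈ Finset.univ.erase i, A i k * x k := by
    rw [mulVec, dotProduct, ← Finset.add_sum_erase _ _ (Finset.mem_univ i)]
  have h1 : |A i i * x i| ≤ |(A *ᵥ x) i| + ∑ k ∈ Finset.univ.erase i, |A i k| * |x k| := by
    have heq : A i i * x i = (A *ᵥ x) i - ∑ k ∈ Finset.univ.erase i, A i k * x k := by
      rw [hsplit]; ring
    rw [heq]
    refine (abs_sub _ _).trans ?_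
    gcongr
    refine (Finset.abs_sum_le_sum_abs _ _).trans_eq ?_
    exact Finset.sum_congr rfl fun k _ => abs_mul _ _
  have hM : (cmpMatrix A *ᵥ vecAbs x) i
      = |A i i| * |x i| - ∑ k ∈ Finset.univ.erase i, |A i k| * |x k| := by
    rw [mulVec, dotProduct, ← Finset.add_sum_erase _ _ (Finset.mem_univ i)]
    simp only [cmpMatrix, Matrix.of_apply, vecAbs, if_pos rfl]
    rw [sub_eq_add_neg, ← Finset.sum_neg_distrib]
    congr 1
    refine Finset.sum_congr rfl fun k hk => ?_
    rw [if_neg (Finset.ne_of_mem_erase hk).symm]  -- careful: condition is i = k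
    ring
  rw [hM, ← abs_mul]
  linarith

lemma mulVec_mono {n : ℕ} (N : Matrix (Fin n) (Fin n) ℝ) (hN : ∀ i j, 0 ≤ N i j)
    {u v : Fin n → ℝ} (huv : ∀ k, u k ≤ v k) (i : Fin n) : (N *ᵥ u) i ≤ (N *ᵥ v) i := by
  simp only [mulVec, dotProduct]
  refine Finset.sum_le_sum fun k _ => ?_
  exact mul_le_mul_of_nonneg_left (huv k) (hN i k)

theorem stmt4 {n : ℕ} (A : Matrix (Fin n) (Fin n) ℝ) (hA : IsHMatrix A) :
    IsUnit A.det ∧ ∀ i j, |A⁻¹ i j| ≤ (cmpMatrix A)⁻¹ i j := by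
  obtain ⟨hZ, hMdet, hMinv⟩ := hA
  set M := cmpMatrix A with hMdef
  have hMM : M⁻¹ * M = 1 := Matrix.nonsing_inv_mul M hMdet
  -- recover a vector from M *ᵥ bound
  have recov : ∀ (u : Fin n → ℝ), M⁻¹ *ᵥ (M *ᵥ u) = u := by
    intro u
    rw [mulVec_mulVec, hMM, one_mulVec]
  have hdet : IsUnit A.det := by
    rw [isUnit_iff_ne_zero]
    intro hdet0
    obtain ⟨v, hv0, hAv⟩ := (Matrix.exists_mulVec_eq_zero_iff).2 hdet0
    have h1 : ∀ i, (M *ᵥ vecAbs v) i ≤ 0 := by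
      intro i
      have := key_lemma A v i
      rw [hAv] at this
      simpa using this
    have h2 : ∀ i, vecAbs v i ≤ 0 := by
      intro i
      have : (M⁻¹ *ᵥ (M *ᵥ vecAbs v)) i ≤ (M⁻¹ *ᵥ 0) i :=
        mulVec_mono _ hMinv h1 i
      rw [recov, Matrix.mulVec_zero] at this
      exact this
    apply hv0
    funext i
    have := h2 i
    have h3 : |v i| = 0 := le_antisymm this (abs_nonneg _)
    exact abs_eq_zero.mp h3
  refine ⟨hdet, fun i j => ?_⟩
  set x : Fin n → ℝ := fun k => A⁻¹ k j with hx
  have hAx : A *ᵥ x = fun k => (1 : Matrix (Fin n) (Fin n) ℝ) k j := by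
    funext k
    have : (A * A⁻¹) = 1 := Matrix.mul_nonsing_inv A hdet
    calc (A *ᵥ x) k = (A * A⁻¹) k j := by
          simp [mulVec, dotProduct, Matrix.mul_apply, hx]
      _ = (1 : Matrix (Fin n) (Fin n) ℝ) k j := by rw [this]
  have hle : ∀ k, (M *ᵥ vecAbs x) k ≤ (Pi.single j 1 : Fin n → ℝ) k := by
    intro k
    have := key_lemma A x k
    rw [hAx] at this
    rw [← hMdef] at this
    refine this.trans ?_
    by_cases hkj : k = j
    · subst hkj; simp [Matrix.one_apply]
    · simp [Matrix.one_apply, hkj, Pi.single_eq_of_ne hkj]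
  have h2 : vecAbs x i ≤ (M⁻¹ *ᵥ (Pi.single j 1 : Fin n → ℝ)) i := by
    have := mulVec_mono M⁻¹ hMinv hle i
    rwa [recov] at this
  have h3 : (M⁻¹ *ᵥ (Pi.single j 1 : Fin n → ℝ)) i = M⁻¹ i j := by
    rw [mulVec, dotProduct]
    rw [Finset.sum_eq_single j]
    · simp
    · intro k _ hkj; simp [Pi.single_eq_of_ne hkj]
    · simp
  rw [h3] at h2
  exact h2
end

section
/- If A is an M-matrix and A = M - N is an M-splitting (M is a nonsingular M-matrix and N ≥ 0 entrywise), then the spectral radius of M^{-1}N is strictly less than 1. -/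
open Matrix BigOperators Filter

open Polynomial in
private lemma entry_nonneg_mul' {n : ℕ} {P Q : Matrix (Fin n) (Fin n) ℝ}
    (hP : ∀ i j, 0 ≤ P i j) (hQ : ∀ i j, 0 ≤ Q i j) : ∀ i j, 0 ≤ (P * Q) i j := by
  intro i j
  rw [Matrix.mul_apply]
  exact Finset.sum_nonneg fun k _ => mul_nonneg (hP i k) (hQ k j)

private lemma entry_nonneg_pow' {n : ℕ} {P : Matrix (Fin n) (Fin n) ℝ}
    (hP : ∀ i j, 0 ≤ P i j) : ∀ k, ∀ i j, 0 ≤ (P ^ k) i j := by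
  intro k
  induction k with
  | zero => intro i j; rw [pow_zero]; simp only [Matrix.one_apply]; positivity
  | succ m ih => rw [pow_succ]; exact entry_nonneg_mul' ih hP

theorem stmt6 {n : ℕ} (A M N : Matrix (Fin n) (Fin n) ℝ)
    (hA : IsMMatrix A) (hsplit : A = M - N)
    (hM : IsMMatrix M) (hN : ∀ i j, 0 ≤ N i j) :
    specRad (M⁻¹ * N) < 1 := by
  set T : Matrix (Fin n) (Fin n) ℝ := M⁻¹ * N with hT
  have hTnn : ∀ i j, 0 ≤ T i j := entry_nonneg_mul' hM.2.2 hN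
  set S : Matrix (Fin n) (Fin n) ℝ := A⁻¹ * M with hS
  have hMA : M = A + N := by rw [hsplit]; abel
  have hSnn : ∀ i j, 0 ≤ S i j := by
    have hSe : S = 1 + A⁻¹ * N := by
      rw [hS, hMA, Matrix.mul_add, Matrix.nonsing_inv_mul A hA.2.1]
    intro i j
    rw [hSe]
    have := entry_nonneg_mul' hA.2.2 hN i j
    simp only [Matrix.add_apply, Matrix.one_apply]
    positivity
  have hinv : (1 - T) * S = 1 := by
    have h1 : (1 : Matrix (Fin n) (Fin n) ℝ) - T = M⁻¹ * A := by
      rw [hsplit, Matrix.mul_sub, Matrix.nonsing_inv_mul M hM.2.1]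
    rw [h1, hS, Matrix.mul_assoc, ← Matrix.mul_assoc A,
      Matrix.mul_nonsing_inv A hA.2.1, Matrix.one_mul,
      Matrix.nonsing_inv_mul M hM.2.1]
  have hrec : S = 1 + T * S := by
    have h := hinv
    rw [Matrix.sub_mul, Matrix.one_mul] at h
    rw [← h]; abel
  have hpart : ∀ k : ℕ, (∑ j ∈ Finset.range k, T ^ j) + T ^ k * S = S := by
    intro k
    induction k with
    | zero => simp
    | succ m ih =>
      rw [Finset.sum_range_succ, pow_succ, Matrix.mul_assoc]
      calc (∑ j ∈ Finset.range m, T ^ j) + T ^ m + T ^ m * (T * S)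
          = (∑ j ∈ Finset.range m, T ^ j) + T ^ m * (1 + T * S) := by
            rw [Matrix.mul_add, Matrix.mul_one]; abel
        _ = S := by rw [← hrec]; exact ih
  have htends : ∀ i j, Filter.Tendsto (fun k => (T ^ k) i j) Filter.atTop (nhds 0) := by
    intro i j
    have hsum : Summable (fun k => (T ^ k) i j) := by
      apply summable_of_sum_range_le (c := S i j)
        (fun k => entry_nonneg_pow' hTnn k i j)
      intro k
      have h1 := hpart k
      have h2 : (∑ m ∈ Finset.range k, T ^ m) i j + (T ^ k * S) i j = S i j := by
        rw [← Matrix.add_apply, h1]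
      have h3 : 0 ≤ (T ^ k * S) i j :=
        entry_nonneg_mul' (entry_nonneg_pow' hTnn k) hSnn i j
      have h4 : (∑ m ∈ Finset.range k, T ^ m) i j
          = ∑ m ∈ Finset.range k, (T ^ m) i j := by
        simp [Matrix.sum_apply]
      linarith
    exact hsum.tendsto_atTop_zero
  -- every eigenvalue has modulus < 1
  have hev : ∀ μ : ℂ, ((T.map Complex.ofReal).charpoly.IsRoot μ) → ‖μ‖ < 1 := by
    intro μ hroot
    by_contra hge
    push_neg at hge
    set B := T.map Complex.ofReal with hB
    have hdet : (Matrix.scalar (Fin n) μ - B).det = 0 := by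
      have he : B.charpoly.eval μ = (Matrix.scalar (Fin n) μ - B).det := by
        rw [Matrix.charpoly, eval_det, Matrix.matPolyEquiv_charmatrix]
        simp
      rw [← he]; exact hroot
    obtain ⟨v, hv, hv0⟩ := (Matrix.exists_mulVec_eq_zero_iff).2 hdet
    have hBv : B *ᵥ v = μ • v := by
      rw [Matrix.sub_mulVec] at hv0
      have h2 : Matrix.scalar (Fin n) μ *ᵥ v = μ • v := by
        ext i
        simp [Matrix.scalar_apply, Matrix.mulVec_diagonal]
      rw [h2, sub_eq_zero] at hv0
      exact hv0.symm
    have hBk : ∀ k : ℕ, (B ^ k) *ᵥ v = μ ^ k • v := by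
      intro k
      induction k with
      | zero => simp
      | succ m ih =>
        rw [pow_succ', pow_succ', ← Matrix.mulVec_mulVec, ih, Matrix.mulVec_smul, hBv,
          smul_smul, mul_comm]
    have hBpow : ∀ k : ℕ, B ^ k = (T ^ k).map Complex.ofReal := by
      intro k
      have h : B = Complex.ofRealHom.mapMatrix T := rfl
      rw [h, ← map_pow]; rfl
    obtain ⟨i, hvi⟩ : ∃ i, v i ≠ 0 := by
      by_contra hc
      push_neg at hc
      exact hv (funext hc)
    have hub : ∀ k : ℕ, ‖v i‖ ≤ ∑ j, (T ^ k) i j * ‖v j‖ := by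
      intro k
      have h1 : ‖((B ^ k) *ᵥ v) i‖ = ‖μ ^ k‖ * ‖v i‖ := by
        rw [hBk k]
        simp [Pi.smul_apply, smul_eq_mul, norm_mul]
      have h2 : ‖((B ^ k) *ᵥ v) i‖ ≤ ∑ j, (T ^ k) i j * ‖v j‖ := by
        rw [hBpow k]
        calc ‖∑ j, ((T ^ k).map Complex.ofReal) i j * v j‖
            ≤ ∑ j, ‖((T ^ k).map Complex.ofReal) i j * v j‖ := by
              exact norm_sum_le _ _
          _ = ∑ j, (T ^ k) i j * ‖v j‖ := by
              apply Finset.sum_congr rfl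
              intro j _
              rw [norm_mul]
              congr 1
              simp [Matrix.map_apply, Complex.norm_real,
                abs_of_nonneg (entry_nonneg_pow' hTnn k i j)]
      have h3 : ‖v i‖ ≤ ‖μ ^ k‖ * ‖v i‖ := by
        have : (1 : ℝ) ≤ ‖μ ^ k‖ := by
          rw [norm_pow]
          exact one_le_pow₀ hge
        nlinarith [norm_nonneg (v i)]
      calc ‖v i‖ ≤ ‖μ ^ k‖ * ‖v i‖ := h3
        _ = ‖((B ^ k) *ᵥ v) i‖ := h1.symm
        _ ≤ _ := h2
    -- RHS tends to 0
    have hrhs : Filter.Tendsto (fun k => ∑ j, (T ^ k) i j * ‖v j‖)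
        Filter.atTop (nhds 0) := by
      have : Filter.Tendsto (fun k => ∑ j, (T ^ k) i j * ‖v j‖)
          Filter.atTop (nhds (∑ j : Fin n, 0 * ‖v j‖)) := by
        apply tendsto_finset_sum
        intro j _
        exact (htends i j).mul_const _
      simpa using this
    have hpos : 0 < ‖v i‖ := by
      simpa [norm_pos_iff] using hvi
    have := ge_of_tendsto hrhs (Filter.Eventually.of_forall hub)
    linarith
  -- conclude using finiteness of the root set
  rw [specRad]
  set E := {x : ℝ | ∃ μ : ℂ, ((M⁻¹ * N).map Complex.ofReal).charpoly.IsRoot μ ∧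
    x = ‖μ‖} with hE
  have hlt : ∀ x ∈ E, x < 1 := by
    rintro x ⟨μ, hroot, rfl⟩
    exact hev μ hroot
  rcases Set.eq_empty_or_nonempty E with h | h
  · rw [h, Real.sSup_empty]; norm_num
  · have hfin : E.Finite := by
      have hne : ((M⁻¹ * N).map Complex.ofReal).charpoly ≠ 0 :=
        (Matrix.charpoly_monic _).ne_zero
      have h1 : E ⊆ (fun μ : ℂ => ‖μ‖) '' {μ : ℂ |
          ((M⁻¹ * N).map Complex.ofReal).charpoly.IsRoot μ} := by
        rintro x ⟨μ, hroot, rfl⟩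
        exact ⟨μ, hroot, rfl⟩
      exact Set.Finite.subset ((Polynomial.finite_setOf_isRoot hne).image _) h1
    have := h.csSup_mem hfin
    exact hlt _ this
end

section
/- If the spectral radius of T = |(M₁ + Ω₁ + I - L₁)^{-1}|(|N₁ + I - L₁| + |Ω₁ - A₁|) is strictly less than 1, then the iteration s^{(k+1)} = (M₁+Ω₁+I-L₁)^{-1}[(N₁+I-L₁)s^{(k)} + (Ω₁-A₁)|s^{(k)}| - rq] converges to the unique fixed point s* for any initial vector s^{(0)} ∈ R^n. -/
open Matrix BigOperators Filter

section Aux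

open Polynomial Filter

lemma eval_charpoly_matrix {n : ℕ} (A : Matrix (Fin n) (Fin n) ℂ) (μ : ℂ) :
    A.charpoly.eval μ = (algebraMap ℂ (Matrix (Fin n) (Fin n) ℂ) μ - A).det := by
  rw [Matrix.charpoly, ← Polynomial.coe_evalRingHom, RingHom.map_det]
  congr 1
  ext i j
  by_cases h : i = j
  · subst h
    simp [Matrix.charmatrix_apply_eq, Matrix.algebraMap_matrix_apply]
  · simp [Matrix.charmatrix_apply_ne _ _ _ h, Matrix.algebraMap_matrix_apply, h]

lemma charpoly_root_of_mem_spectrum {n : ℕ} (A : Matrix (Fin n) (Fin n) ℂ) (μ : ℂ)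
    (h : μ ∈ spectrum ℂ A) : A.charpoly.IsRoot μ := by
  rw [spectrum.mem_iff, Matrix.isUnit_iff_isUnit_det, isUnit_iff_ne_zero, not_not] at h
  rw [Polynomial.IsRoot, eval_charpoly_matrix, h]

lemma pow_entry_tendsto_zero {n : ℕ} (T : Matrix (Fin n) (Fin n) ℝ) (hρ : specRad T < 1)
    (i j : Fin n) : Tendsto (fun k => (T ^ k) i j) atTop (nhds 0) := by
  letI : NormedRing (Matrix (Fin n) (Fin n) ℂ) := Matrix.linftyOpNormedRing
  letI : NormedAlgebra ℂ (Matrix (Fin n) (Fin n) ℂ) := Matrix.linftyOpNormedAlgebra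
  letI : CompleteSpace (Matrix (Fin n) (Fin n) ℂ) :=
    FiniteDimensional.complete ℂ (Matrix (Fin n) (Fin n) ℂ)
  set Tc : Matrix (Fin n) (Fin n) ℂ := T.map (Complex.ofReal) with hTc
  have hfin : {x : ℝ | ∃ μ : ℂ, Tc.charpoly.IsRoot μ ∧ x = ‖μ‖}.Finite := by
    have h1 : Tc.charpoly ≠ 0 := (Matrix.charpoly_monic Tc).ne_zero
    have h2 := (Polynomial.finite_setOf_isRoot h1).image (fun μ : ℂ => ‖μ‖)
    refine h2.subset fun x hx => ?_
    obtain ⟨μ, hμ, rfl⟩ := hx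
    exact ⟨μ, hμ, rfl⟩
  have hbdd : BddAbove {x : ℝ | ∃ μ : ℂ, Tc.charpoly.IsRoot μ ∧ x = ‖μ‖} :=
    hfin.bddAbove
  have habs : ∀ μ : ℂ, Tc.charpoly.IsRoot μ → ‖μ‖ ≤ specRad T := by
    intro μ hμ
    exact le_csSup hbdd ⟨μ, hμ, rfl⟩
  have hsr : spectralRadius ℂ Tc < 1 := by
    have hc : ENNReal.ofReal (max (specRad T) 0) < 1 := by
      rw [ENNReal.ofReal_lt_one]
      exact max_lt hρ one_pos
    refine lt_of_le_of_lt ?_ hc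
    rw [spectralRadius]
    refine iSup₂_le fun μ hμ => ?_
    have h1 : ‖μ‖ ≤ max (specRad T) 0 :=
      le_trans (habs μ (charpoly_root_of_mem_spectrum Tc μ hμ)) (le_max_left _ _)
    calc (‖μ‖₊ : ENNReal) = ENNReal.ofReal ‖μ‖ := (ofReal_norm_eq_enorm μ).symm
      _ ≤ ENNReal.ofReal (max (specRad T) 0) := by
          refine ENNReal.ofReal_le_ofReal ?_
          exact h1
  obtain ⟨R, hR1, hR2⟩ := exists_between hsr
  have hRtop : R ≠ ⊤ := (hR2.trans_le le_top).ne
  set r : NNReal := R.toNNReal with hrdef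
  have hrR : (r : ENNReal) = R := ENNReal.coe_toNNReal hRtop
  have hr1 : (r : ℝ) < 1 := by
    have := hR2
    rw [← hrR] at this
    exact_mod_cast this
  have hg := spectrum.pow_nnnorm_pow_one_div_tendsto_nhds_spectralRadius Tc
  have hev : ∀ᶠ k : ℕ in atTop, ((‖Tc ^ k‖₊ : ENNReal) ^ (1 / (k : ℝ))) < R :=
    hg.eventually_lt_const hR1
  have hbound : ∀ᶠ k in atTop, |(T ^ k) i j| ≤ (r : ℝ) ^ k := by
    filter_upwards [hev, eventually_ge_atTop 1] with k hk hk1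
    have hk0 : (k : ℝ) ≠ 0 := Nat.cast_ne_zero.mpr (by omega)
    have h2 : (‖Tc ^ k‖₊ : ENNReal) ≤ R ^ (k : ℝ) := by
      have h3 := ENNReal.rpow_le_rpow hk.le (Nat.cast_nonneg k : (0:ℝ) ≤ k)
      have h3' : (((‖Tc ^ k‖₊ : ENNReal) ^ (1 / (k : ℝ))) ^ (k : ℝ))
          = (‖Tc ^ k‖₊ : ENNReal) := by
        rw [← ENNReal.rpow_mul, one_div_mul_cancel hk0, ENNReal.rpow_one]
      rwa [h3'] at h3
    rw [← hrR, ENNReal.rpow_natCast, ← ENNReal.coe_pow, ENNReal.coe_le_coe] at h2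
    have h4 : ‖Tc ^ k‖ ≤ (r : ℝ) ^ k := by
      have := h2
      rw [← NNReal.coe_le_coe] at this
      simpa [coe_nnnorm] using this
    have hpow : ∀ (m : ℕ) (a b : Fin n), (Tc ^ m) a b = (((T ^ m) a b : ℝ) : ℂ) := by
      intro m
      induction m with
      | zero => intro a b; simp [Matrix.one_apply, apply_ite]
      | succ m ih =>
        intro a b
        rw [pow_succ, pow_succ, Matrix.mul_apply, Matrix.mul_apply]
        push_cast
        refine Finset.sum_congr rfl fun c _ => ?_
        rw [ih a c, hTc]
        simp [Matrix.map_apply]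
    have hentry : |(T ^ k) i j| = ‖(Tc ^ k) i j‖ := by
      rw [hpow k i j]
      simp [Real.norm_eq_abs]
    rw [hentry]
    refine le_trans ?_ h4
    have h5 : ‖(Tc ^ k) i j‖₊ ≤ ‖Tc ^ k‖₊ := by
      rw [Matrix.linfty_opNNNorm_def]
      refine le_trans ?_ (Finset.le_sup (Finset.mem_univ i))
      exact Finset.single_le_sum (f := fun j' => ‖(Tc ^ k) i j'‖₊)
        (fun _ _ => zero_le) (Finset.mem_univ j)
    exact_mod_cast h5
  have habs0 : Tendsto (fun k => |(T ^ k) i j|) atTop (nhds 0) := by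
    refine squeeze_zero' (Eventually.of_forall fun k => abs_nonneg _) hbound ?_
    exact tendsto_pow_atTop_nhds_zero_of_lt_one r.coe_nonneg hr1
  exact (tendsto_zero_iff_abs_tendsto_zero _).mpr habs0

end Aux

theorem stmt12 {n : ℕ} (A₁ M₁ N₁ L₁ Ω₁ T : Matrix (Fin n) (Fin n) ℝ)
    (q sstar : Fin n → ℝ) (r : ℝ) (F : (Fin n → ℝ) → (Fin n → ℝ))
    (s : ℕ → Fin n → ℝ)
    (hL : L₁ = strictLower A₁) (hΩ : posDiag Ω₁) (hr : 0 < r)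
    (hsplit : A₁ = (M₁ + 1 - L₁) - (N₁ + 1 - L₁))
    (hns : IsUnit (M₁ + Ω₁ + 1 - L₁).det)
    (hF : ∀ x, F x = (M₁ + Ω₁ + 1 - L₁)⁻¹.mulVec
      ((N₁ + 1 - L₁).mulVec x + (Ω₁ - A₁).mulVec (vecAbs x) - r • q))
    (hT : T = matAbs ((M₁ + Ω₁ + 1 - L₁)⁻¹) * (matAbs (N₁ + 1 - L₁) + matAbs (Ω₁ - A₁)))
    (hρ : specRad T < 1)
    (hiter : ∀ k, s (k + 1) = F (s k))
    (hfix : sstar = F sstar) :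
    Tendsto s atTop (nhds sstar) ∧ ∀ t, t = F t → t = sstar := by
  have hTnn : ∀ i j, 0 ≤ T i j := by
    intro i j
    rw [hT, Matrix.mul_apply]
    refine Finset.sum_nonneg fun l _ => mul_nonneg ?_ ?_
    · simp [matAbs, abs_nonneg]
    · simp only [Matrix.add_apply, matAbs, Matrix.of_apply]
      exact add_nonneg (abs_nonneg _) (abs_nonneg _)
  have hcontr : ∀ x y : Fin n → ℝ, ∀ i,
      |F x i - F y i| ≤ T.mulVec (fun l => |x l - y l|) i := by
    intro x y i
    have hTe : T.mulVec (fun l => |x l - y l|) = (matAbs ((M₁ + Ω₁ + 1 - L₁)⁻¹)).mulVec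
        ((matAbs (N₁ + 1 - L₁) + matAbs (Ω₁ - A₁)).mulVec (fun l => |x l - y l|)) := by
      rw [hT, ← Matrix.mulVec_mulVec]
    rw [hF x, hF y, hTe]
    simp only [Matrix.mulVec, dotProduct, Pi.add_apply, Pi.sub_apply, Pi.smul_apply,
      smul_eq_mul, matAbs, Matrix.of_apply, Matrix.add_apply, vecAbs]
    rw [← Finset.sum_sub_distrib]
    refine le_trans (Finset.abs_sum_le_sum_abs _ _) ?_
    refine Finset.sum_le_sum fun jj _ => ?_
    rw [← mul_sub, abs_mul]
    refine mul_le_mul_of_nonneg_left ?_ (abs_nonneg _)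
    have hrw : (∑ l, (N₁ + 1 - L₁) jj l * x l + ∑ l, (Ω₁ - A₁) jj l * |x l| - r * q jj)
        - (∑ l, (N₁ + 1 - L₁) jj l * y l + ∑ l, (Ω₁ - A₁) jj l * |y l| - r * q jj)
        = ∑ l, (N₁ + 1 - L₁) jj l * (x l - y l)
          + ∑ l, (Ω₁ - A₁) jj l * (|x l| - |y l|) := by
      simp only [mul_sub, Finset.sum_sub_distrib]
      ring
    rw [hrw]
    have hsplitsum : ∑ l, (|(N₁ + 1 - L₁) jj l| + |(Ω₁ - A₁) jj l|) * |x l - y l|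
        = ∑ l, |(N₁ + 1 - L₁) jj l| * |x l - y l|
          + ∑ l, |(Ω₁ - A₁) jj l| * |x l - y l| := by
      rw [← Finset.sum_add_distrib]
      exact Finset.sum_congr rfl fun l _ => by ring
    rw [hsplitsum]
    refine le_trans (abs_add_le _ _) (add_le_add ?_ ?_)
    · refine le_trans (Finset.abs_sum_le_sum_abs _ _) (Finset.sum_le_sum fun l _ => ?_)
      exact le_of_eq (abs_mul _ _)
    · refine le_trans (Finset.abs_sum_le_sum_abs _ _) (Finset.sum_le_sum fun l _ => ?_)
      rw [abs_mul]
      exact mul_le_mul_of_nonneg_left (abs_abs_sub_abs_le_abs_sub _ _) (abs_nonneg _)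
  have hmono : ∀ u v : Fin n → ℝ, (∀ l, u l ≤ v l) → ∀ i, T.mulVec u i ≤ T.mulVec v i := by
    intro u v huv i
    simp only [Matrix.mulVec, dotProduct]
    exact Finset.sum_le_sum fun l _ => mul_le_mul_of_nonneg_left (huv l) (hTnn i l)
  have hiterbound : ∀ x : ℕ → Fin n → ℝ, (∀ k, x (k + 1) = F (x k)) → ∀ k i,
      |x k i - sstar i| ≤ (T ^ k).mulVec (fun l => |x 0 l - sstar l|) i := by
    intro x hx k
    induction k with
    | zero => intro i; rw [pow_zero, Matrix.one_mulVec]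
    | succ k ih =>
      intro i
      have h1 : |x (k + 1) i - sstar i| ≤ T.mulVec (fun l => |x k l - sstar l|) i := by
        have h2 := hcontr (x k) sstar i
        rw [← hx k, ← hfix] at h2
        exact h2
      refine le_trans h1 (le_trans (hmono _ _ (fun l => ih l) i) ?_)
      rw [Matrix.mulVec_mulVec, ← pow_succ']
  have hg : ∀ (c : Fin n → ℝ) (i : Fin n),
      Tendsto (fun k => (T ^ k).mulVec c i) atTop (nhds 0) := by
    intro c i
    simp only [Matrix.mulVec, dotProduct]
    have h1 := tendsto_finset_sum (Finset.univ : Finset (Fin n))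
      (fun j _ => (pow_entry_tendsto_zero T hρ i j).mul_const (c j))
    simpa using h1
  constructor
  · rw [tendsto_pi_nhds]
    intro i
    rw [tendsto_iff_dist_tendsto_zero]
    refine squeeze_zero (fun k => dist_nonneg) (fun k => ?_)
      (hg (fun l => |s 0 l - sstar l|) i)
    rw [Real.dist_eq]
    exact hiterbound s hiter k i
  · intro t ht
    funext i
    have hb := hiterbound (fun _ => t) (fun _ => ht) 
    have h0 : |t i - sstar i| ≤ 0 :=
      ge_of_tendsto (hg (fun l => |t l - sstar l|) i)
        (Filter.Eventually.of_forall fun k => hb k i)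
    have := abs_nonpos_iff.mp h0
    exact sub_eq_zero.mp this
end

section
/- Let A₁ be an H₊-matrix with diagonal part D₁ and let A₁ = (M₁+I-L₁)-(N₁+I-L₁) be an H-compatible splitting, i.e., ⟨A₁⟩ = ⟨M₁+I-L₁⟩ - |N₁+I-L₁|. If Ω₁ is a positive diagonal matrix with Ω₁ ≥ D₁, then ρ(T) < 1 where T = |(M₁+Ω₁+I-L₁)^{-1}|(|N₁+I-L₁| + |Ω₁-A₁|). -/
open Matrix BigOperators Filter

lemma root_eigvec {n : ℕ} (M : Matrix (Fin n) (Fin n) ℂ) (μ : ℂ)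
    (h : M.charpoly.IsRoot μ) : ∃ x : Fin n → ℂ, x ≠ 0 ∧ M *ᵥ x = μ • x := by
  have hmap : (charmatrix M).map (Polynomial.evalRingHom μ)
      = μ • (1 : Matrix (Fin n) (Fin n) ℂ) - M := by
    ext i j
    by_cases hij : i = j
    · subst hij
      simp [charmatrix_apply_eq, Matrix.one_apply]
    · simp [charmatrix_apply_ne _ _ _ hij, Matrix.one_apply, hij]
  have hdet : (μ • (1 : Matrix (Fin n) (Fin n) ℂ) - M).det = 0 := by
    have h2 := (RingHom.map_det (Polynomial.evalRingHom μ) (charmatrix M)).symm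
    rw [RingHom.mapMatrix_apply] at h2
    rw [← hmap, h2]
    simpa [Matrix.charpoly, Polynomial.IsRoot] using h
  obtain ⟨x, hx0, hx⟩ := (Matrix.exists_mulVec_eq_zero_iff).mpr hdet
  refine ⟨x, hx0, ?_⟩
  rw [Matrix.sub_mulVec, Matrix.smul_mulVec, Matrix.one_mulVec, sub_eq_zero] at hx
  exact hx.symm

lemma key_bound {n : ℕ} (B : Matrix (Fin n) (Fin n) ℝ) (v x : Fin n → ℝ)
    (hv : ∀ i, 0 < v i) (hdom : ∀ i, 0 < (cmpMatrix B *ᵥ v) i)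
    (hx : ∀ j, |(B *ᵥ x) j| < (cmpMatrix B *ᵥ v) j) :
    ∀ i, |x i| < v i := by
  intro i
  have hne : (Finset.univ : Finset (Fin n)).Nonempty := ⟨i, Finset.mem_univ i⟩
  obtain ⟨i₀, -, hmax⟩ := Finset.exists_max_image Finset.univ (fun j => |x j| / v j) hne
  set c := |x i₀| / v i₀ with hc
  have hcle : ∀ j, |x j| ≤ c * v j := by
    intro j
    have h := hmax j (Finset.mem_univ j)
    rw [div_le_iff₀ (hv j)] at h
    linarith
  have hxc : |x i₀| = c * v i₀ := by
    rw [hc, div_mul_cancel₀ _ (hv i₀).ne']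
  set e := Finset.univ.erase i₀ with he
  have hrow : (B *ᵥ x) i₀ = B i₀ i₀ * x i₀ + ∑ j ∈ e, B i₀ j * x j := by
    rw [Matrix.mulVec, dotProduct, ← Finset.add_sum_erase _ _ (Finset.mem_univ i₀)]
  have hcv : (cmpMatrix B *ᵥ v) i₀ = |B i₀ i₀| * v i₀ - ∑ j ∈ e, |B i₀ j| * v j := by
    rw [Matrix.mulVec, dotProduct, ← Finset.add_sum_erase _ _ (Finset.mem_univ i₀)]
    simp only [cmpMatrix, Matrix.of_apply, if_pos rfl]
    rw [Finset.sum_congr rfl (fun j hj => by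
      rw [if_neg (fun hh => (Finset.mem_erase.mp hj).1 hh.symm)])]
    rw [sub_eq_add_neg, ← Finset.sum_neg_distrib]
    congr 1
    exact Finset.sum_congr rfl (fun j _ => by ring)
  set a := |B i₀ i₀| * v i₀ with ha
  set s := ∑ j ∈ e, |B i₀ j| * v j with hs
  have habs : |B i₀ i₀ * x i₀| ≤ |(B *ᵥ x) i₀| + ∑ j ∈ e, |B i₀ j| * |x j| := by
    have h1 : B i₀ i₀ * x i₀ = (B *ᵥ x) i₀ - ∑ j ∈ e, B i₀ j * x j := by
      rw [hrow]; ring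
    rw [h1]
    calc |(B *ᵥ x) i₀ - ∑ j ∈ e, B i₀ j * x j|
        ≤ |(B *ᵥ x) i₀| + |∑ j ∈ e, B i₀ j * x j| := abs_sub _ _
      _ ≤ |(B *ᵥ x) i₀| + ∑ j ∈ e, |B i₀ j| * |x j| := by
          gcongr
          calc |∑ j ∈ e, B i₀ j * x j| ≤ ∑ j ∈ e, |B i₀ j * x j| :=
                Finset.abs_sum_le_sum_abs _ _
            _ = ∑ j ∈ e, |B i₀ j| * |x j| :=
                Finset.sum_congr rfl (fun j _ => abs_mul _ _)
  have hsum2 : ∑ j ∈ e, |B i₀ j| * |x j| ≤ c * s := by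
    rw [hs, Finset.mul_sum]
    refine Finset.sum_le_sum (fun j _ => ?_)
    have := hcle j
    nlinarith [abs_nonneg (B i₀ j)]
  have hkey : c * a < (a - s) + c * s := by
    have h1 : |B i₀ i₀ * x i₀| = c * a := by
      rw [abs_mul, hxc, ha]; ring
    have h2 := hx i₀
    rw [hcv] at h2
    linarith [habs, hsum2]
  have hdom' : 0 < a - s := by
    have := hdom i₀
    rw [hcv] at this
    linarith
  have hc1 : c < 1 := by
    by_contra hcon
    push_neg at hcon
    nlinarith
  calc |x i| ≤ c * v i := hcle i
    _ < 1 * v i := by have := hv i; nlinarith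
    _ = v i := one_mul _

lemma eig_lt_one {n : ℕ} (T : Matrix (Fin n) (Fin n) ℝ) (v : Fin n → ℝ)
    (hT : ∀ i j, 0 ≤ T i j) (hv : ∀ i, 0 < v i) (hTv : ∀ i, (T *ᵥ v) i < v i)
    (μ : ℂ) (hμ : (T.map (Complex.ofReal)).charpoly.IsRoot μ) : ‖μ‖ < 1 := by
  obtain ⟨x, hx0, hx⟩ := root_eigvec _ μ hμ
  set y : Fin n → ℝ := fun i => ‖x i‖ with hy
  obtain ⟨j₀, hj₀⟩ := Function.ne_iff.mp hx0
  have hy0 : ∀ i, 0 ≤ y i := fun i => norm_nonneg _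
  have hyT : ∀ i, ‖μ‖ * y i ≤ (T *ᵥ y) i := by
    intro i
    have h1 : (T.map (Complex.ofReal) *ᵥ x) i = μ * x i := by
      rw [hx]; simp
    have h2 : ‖μ‖ * y i = ‖(T.map (Complex.ofReal) *ᵥ x) i‖ := by
      rw [h1, norm_mul]
    rw [h2]
    calc ‖∑ j, (T.map (Complex.ofReal)) i j * x j‖
        ≤ ∑ j, ‖(T.map (Complex.ofReal)) i j * x j‖ :=
          norm_sum_le _ _
      _ = ∑ j, T i j * y j := by
          refine Finset.sum_congr rfl (fun j _ => ?_)
          rw [norm_mul]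
          simp [Matrix.map_apply, Complex.norm_real, Real.norm_eq_abs, abs_of_nonneg (hT i j), hy]
      _ = (T *ᵥ y) i := rfl
  have hne : (Finset.univ : Finset (Fin n)).Nonempty := ⟨j₀, Finset.mem_univ j₀⟩
  obtain ⟨i₀, -, hmax⟩ := Finset.exists_max_image Finset.univ (fun j => y j / v j) hne
  set c := y i₀ / v i₀ with hc
  have hcle : ∀ j, y j ≤ c * v j := by
    intro j
    have h := hmax j (Finset.mem_univ j)
    rw [div_le_iff₀ (hv j)] at h
    linarith
  have hcpos : 0 < c := by
    have h1 : 0 < y j₀ := by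
      simpa [hy] using (norm_pos_iff.mpr hj₀)
    have := hcle j₀
    nlinarith [hv j₀]
  have hyi : y i₀ = c * v i₀ := by rw [hc, div_mul_cancel₀ _ (hv i₀).ne']
  have hTy : (T *ᵥ y) i₀ ≤ c * (T *ᵥ v) i₀ := by
    show ∑ j, T i₀ j * y j ≤ c * ∑ j, T i₀ j * v j
    rw [Finset.mul_sum]
    refine Finset.sum_le_sum (fun j _ => ?_)
    have := hcle j
    nlinarith [hT i₀ j]
  have hfin : ‖μ‖ * (c * v i₀) < c * v i₀ := by
    calc ‖μ‖ * (c * v i₀) = ‖μ‖ * y i₀ := by rw [hyi]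
      _ ≤ (T *ᵥ y) i₀ := hyT i₀
      _ ≤ c * (T *ᵥ v) i₀ := hTy
      _ < c * v i₀ := by nlinarith [hTv i₀]
  have hcv : 0 < c * v i₀ := mul_pos hcpos (hv i₀)
  nlinarith


lemma specRad_lt_one {n : ℕ} (T : Matrix (Fin n) (Fin n) ℝ)
    (h : ∀ μ : ℂ, (T.map (Complex.ofReal)).charpoly.IsRoot μ → ‖μ‖ < 1) :
    specRad T < 1 := by
  set S := {x : ℝ | ∃ μ : ℂ, (T.map (Complex.ofReal)).charpoly.IsRoot μ ∧ x = ‖μ‖}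
    with hS
  have hfin : S.Finite := by
    have h1 : {μ : ℂ | (T.map (Complex.ofReal)).charpoly.IsRoot μ}.Finite :=
      Polynomial.finite_setOf_isRoot (Matrix.charpoly_monic _).ne_zero
    have h2 : S ⊆ (fun z : ℂ => ‖z‖) '' {μ : ℂ | (T.map (Complex.ofReal)).charpoly.IsRoot μ} := by
      rintro x ⟨μ, hμ, rfl⟩
      exact ⟨μ, hμ, rfl⟩
    exact Set.Finite.subset (h1.image _) h2
  rcases S.eq_empty_or_nonempty with hemp | hne
  · rw [specRad, ← hS, hemp, Real.sSup_empty]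
    norm_num
  · have hmem : sSup S ∈ S := hne.csSup_mem hfin
    obtain ⟨μ, hμ, hx⟩ := hmem
    rw [specRad, ← hS, hx]
    exact h μ hμ

theorem stmt13 {n : ℕ} (A₁ M₁ N₁ L₁ Ω₁ : Matrix (Fin n) (Fin n) ℝ)
    (hA : IsHPlusMatrix A₁)
    (hL : L₁ = strictLower A₁) (hΩ : posDiag Ω₁)
    (hsplit : A₁ = (M₁ + 1 - L₁) - (N₁ + 1 - L₁))
    (hcompat : cmpMatrix A₁ = cmpMatrix (M₁ + 1 - L₁) - matAbs (N₁ + 1 - L₁))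
    (hge : ∀ i j, Matrix.diagonal (fun k => A₁ k k) i j ≤ Ω₁ i j) :
    specRad (matAbs ((M₁ + Ω₁ + 1 - L₁)⁻¹) *
      (matAbs (N₁ + 1 - L₁) + matAbs (Ω₁ - A₁))) < 1 := by
  obtain ⟨⟨hZ, hdetA, hinv⟩, hAd⟩ := hA
  set S := M₁ + 1 - L₁ with hSdef
  set B := M₁ + Ω₁ + 1 - L₁ with hBdef
  set Km := matAbs (N₁ + 1 - L₁) + matAbs (Ω₁ - A₁) with hKmdef
  have hBS : ∀ i j, B i j = S i j + Ω₁ i j := by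
    intro i j
    have : B = S + Ω₁ := by rw [hBdef, hSdef]; abel
    rw [this, Matrix.add_apply]
  have hN : N₁ + 1 - L₁ = S - A₁ := by rw [hsplit]; abel
  have hΩd : ∀ i, A₁ i i ≤ Ω₁ i i := by
    intro i
    have := hge i i
    rwa [Matrix.diagonal_apply_eq] at this
  have hΩo : ∀ i j, i ≠ j → Ω₁ i j = 0 := hΩ.1
  -- diagonal of S dominates that of A₁
  have hSd : ∀ i, A₁ i i ≤ S i i := by
    intro i
    have h := congrFun (congrFun hcompat i) i
    rw [hN] at h
    simp only [cmpMatrix, matAbs, Matrix.of_apply, eq_self_iff_true, if_true,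
      Matrix.sub_apply] at h
    have h0 := hAd i
    rcases abs_cases (S i i) with ⟨h1, h1'⟩ | ⟨h1, h1'⟩ <;>
      rcases abs_cases (S i i - A₁ i i) with ⟨h3, h3'⟩ | ⟨h3, h3'⟩ <;>
      rcases abs_cases (A₁ i i) with ⟨h5, h5'⟩ | ⟨h5, h5'⟩ <;> linarith
  -- the positive vector v
  set v := (cmpMatrix A₁)⁻¹ *ᵥ (fun _ => (1:ℝ)) with hvdef
  have hv1 : cmpMatrix A₁ *ᵥ v = fun _ => (1:ℝ) := by
    rw [hvdef, Matrix.mulVec_mulVec, Matrix.mul_nonsing_inv _ hdetA, Matrix.one_mulVec]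
  have hv0 : ∀ i, 0 ≤ v i := by
    intro i
    have : v i = ∑ j, (cmpMatrix A₁)⁻¹ i j * 1 := by
      rw [hvdef]; simp [Matrix.mulVec, dotProduct]
    rw [this]
    exact Finset.sum_nonneg fun j _ => mul_nonneg (hinv i j) zero_le_one
  have hvpos : ∀ i, 0 < v i := by
    intro i
    rcases lt_or_ge 0 (v i) with h | h
    · exact h
    have hvi : v i = 0 := le_antisymm h (hv0 i)
    have h2 : ∑ j, cmpMatrix A₁ i j * v j = 1 := by
      have h1 := congrFun hv1 i
      simpa [Matrix.mulVec, dotProduct] using h1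
    have h3 : ∑ j, cmpMatrix A₁ i j * v j ≤ 0 := by
      apply Finset.sum_nonpos
      intro j _
      by_cases hij : i = j
      · rw [← hij, hvi, mul_zero]
      · exact mul_nonpos_iff.mpr (Or.inr ⟨hZ i j hij, hv0 j⟩)
    linarith
  -- entrywise identity for cmpMatrix B
  have hKm0 : ∀ i j, 0 ≤ Km i j := by
    intro i j
    simp only [hKmdef, Matrix.add_apply, matAbs, Matrix.of_apply]
    positivity
  have hKB : ∀ i j, cmpMatrix B i j = Km i j + 2 * cmpMatrix A₁ i j := by
    intro i j
    have hcS := congrFun (congrFun hcompat i) j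
    rw [hN] at hcS
    rw [hKmdef, hN]
    by_cases hij : i = j
    · subst hij
      simp only [cmpMatrix, matAbs, Matrix.of_apply, eq_self_iff_true, if_true,
        Matrix.sub_apply, Matrix.add_apply] at hcS ⊢
      have h0 := hAd i
      have h1 := hSd i
      have h2 := hΩd i
      have h3 := (hΩ.2 i)
      rw [hBS i i]
      rcases abs_cases (A₁ i i) with ⟨hh1, hh1'⟩ | ⟨hh1, hh1'⟩ <;>
        rcases abs_cases (S i i) with ⟨hh2, hh2'⟩ | ⟨hh2, hh2'⟩ <;>
        rcases abs_cases (S i i - A₁ i i) with ⟨hh3, hh3'⟩ | ⟨hh3, hh3'⟩ <;>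
        rw [abs_of_pos (show (0:ℝ) < S i i + Ω₁ i i by linarith),
          abs_of_nonneg (show (0:ℝ) ≤ Ω₁ i i - A₁ i i by linarith)] <;>
        linarith
    · simp only [cmpMatrix, matAbs, Matrix.of_apply, if_neg hij, Matrix.sub_apply,
        Matrix.add_apply] at hcS ⊢
      rw [hBS i j, hΩo i j hij, add_zero, zero_sub, abs_neg]
      linarith
  -- main vector identity
  have hBv : ∀ i, (cmpMatrix B *ᵥ v) i = (Km *ᵥ v) i + 2 := by
    intro i
    have h2 : ∑ j, cmpMatrix A₁ i j * v j = 1 := by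
      simpa [Matrix.mulVec, dotProduct] using congrFun hv1 i
    have h1 : (cmpMatrix B *ᵥ v) i = ∑ j, (Km i j + 2 * cmpMatrix A₁ i j) * v j := by
      simp only [Matrix.mulVec, dotProduct]
      exact Finset.sum_congr rfl fun j _ => by rw [hKB i j]
    have h3 : ∀ j, (Km i j + 2 * cmpMatrix A₁ i j) * v j
        = Km i j * v j + 2 * (cmpMatrix A₁ i j * v j) := fun j => by ring
    rw [h1, Finset.sum_congr rfl fun j _ => h3 j, Finset.sum_add_distrib,
      ← Finset.mul_sum, h2, mul_one]
    rfl
  have hu0 : ∀ j, 0 ≤ (Km *ᵥ v) j := by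
    intro j
    simp only [Matrix.mulVec, dotProduct]
    exact Finset.sum_nonneg fun k _ => mul_nonneg (hKm0 j k) (hv0 k)
  have hdom : ∀ i, 0 < (cmpMatrix B *ᵥ v) i := by
    intro i
    rw [hBv i]
    linarith [hu0 i]
  -- B is invertible
  have hBdet : IsUnit B.det := by
    rw [isUnit_iff_ne_zero]
    intro hdet0
    obtain ⟨x, hx0, hx⟩ := Matrix.exists_mulVec_eq_zero_iff.mpr hdet0
    obtain ⟨j, hj⟩ := Function.ne_iff.mp hx0
    have hxj : x j ≠ 0 := by simpa using hj
    set t := v j / |x j| with ht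
    have htpos : 0 < t := div_pos (hvpos j) (abs_pos.mpr hxj)
    have hcond : ∀ i, |(B *ᵥ (t • x)) i| < (cmpMatrix B *ᵥ v) i := by
      intro i
      rw [Matrix.mulVec_smul, hx]
      simpa using hdom i
    have h1 := key_bound B v (t • x) hvpos hdom hcond j
    rw [Pi.smul_apply, smul_eq_mul, abs_mul, abs_of_pos htpos, ht,
      div_mul_cancel₀ _ (abs_ne_zero.mpr hxj)] at h1
    exact lt_irrefl _ h1
  have hBinv : B * B⁻¹ = 1 := Matrix.mul_nonsing_inv _ hBdet
  -- T v < v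
  have hTv : ∀ i, ((matAbs B⁻¹ * Km) *ᵥ v) i < v i := by
    intro i
    set u := Km *ᵥ v with hu
    set y : Fin n → ℝ := fun j => (if B⁻¹ i j < 0 then (-1:ℝ) else 1) * u j with hy
    have hyabs : ∀ j, |y j| = u j := by
      intro j
      have hyj : y j = (if B⁻¹ i j < 0 then (-1:ℝ) else 1) * u j := rfl
      rw [hyj]
      by_cases hb : B⁻¹ i j < 0 <;> simp [hb, abs_mul, abs_of_nonneg (hu0 j)]
    have hval : ((matAbs B⁻¹ * Km) *ᵥ v) i = (B⁻¹ *ᵥ y) i := by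
      rw [← Matrix.mulVec_mulVec]
      simp only [Matrix.mulVec, dotProduct]
      refine Finset.sum_congr rfl fun j _ => ?_
      have hu' : (∑ x, Km j x * v x) = u j := rfl
      have hyj : y j = (if B⁻¹ i j < 0 then (-1:ℝ) else 1) * u j := rfl
      rw [hu', hyj]
      simp only [matAbs, Matrix.of_apply]
      by_cases hb : B⁻¹ i j < 0
      · rw [if_pos hb, abs_of_neg hb]; ring
      · rw [if_neg hb, abs_of_nonneg (not_lt.mp hb)]; ring
    have hBx : B *ᵥ (B⁻¹ *ᵥ y) = y := by
      rw [Matrix.mulVec_mulVec, hBinv, Matrix.one_mulVec]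
    have hcond : ∀ j, |(B *ᵥ (B⁻¹ *ᵥ y)) j| < (cmpMatrix B *ᵥ v) j := by
      intro j
      rw [hBx, hyabs j]
      have := hBv j
      linarith
    have h1 := key_bound B v (B⁻¹ *ᵥ y) hvpos hdom hcond i
    rw [hval]
    calc (B⁻¹ *ᵥ y) i ≤ |(B⁻¹ *ᵥ y) i| := le_abs_self _
      _ < v i := h1
  have hT0 : ∀ i j, 0 ≤ (matAbs B⁻¹ * Km) i j := by
    intro i j
    rw [Matrix.mul_apply]
    refine Finset.sum_nonneg fun k _ => mul_nonneg ?_ (hKm0 k j)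
    simp [matAbs]
  exact specRad_lt_one _ (fun μ hμ => eig_lt_one _ v hT0 hvpos hTv μ hμ)
end

section
/- Let A₁ be an H₊-matrix with diagonal part D₁ and off-diagonal part B = L₁ + U₁, and let A₁ = (M₁+I-L₁)-(N₁+I-L₁) be an H-compatible splitting (⟨A₁⟩ = ⟨M₁+I-L₁⟩ - |N₁+I-L₁|). If Ω₁ is a positive diagonal matrix with Ω₁ < D₁ and ⟨A₁⟩ + 2Ω₁ - D₁ - |B| is an M-matrix, then ρ(T) < 1 where T = |(M₁+Ω₁+I-L₁)^{-1}|(|N₁+I-L₁| + |Ω₁-A₁|). -/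
open Matrix BigOperators Filter

/-! ### Auxiliary lemmas -/

lemma mulVec_apply' {α : Type*} [NonUnitalNonAssocSemiring α] {n : ℕ}
    (P : Matrix (Fin n) (Fin n) α) (a : Fin n → α) (i : Fin n) :
    (P *ᵥ a) i = ∑ j, P i j * a j := rfl

lemma solution_nonneg {n : ℕ} {E : Matrix (Fin n) (Fin n) ℝ} (hZ : IsZMatrix E)
    {v : Fin n → ℝ} (hv : ∀ i, 0 < v i) (hEv : ∀ i, 0 < (E *ᵥ v) i)
    {x : Fin n → ℝ} (hb : ∀ i, 0 ≤ (E *ᵥ x) i) : ∀ i, 0 ≤ x i := by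
  by_contra hcon
  push_neg at hcon
  obtain ⟨k, hk⟩ := hcon
  obtain ⟨i, -, hi⟩ := Finset.exists_min_image Finset.univ (fun j => x j / v j)
    ⟨k, Finset.mem_univ k⟩
  set t := x i / v i with ht
  have hti : t < 0 := lt_of_le_of_lt (hi k (Finset.mem_univ k))
    (div_neg_of_neg_of_pos hk (hv k))
  have hxi : x i = t * v i := by
    rw [ht, div_mul_cancel₀ _ (hv i).ne']
  have hge : ∀ j, t * v j ≤ x j := by
    intro j
    have h1 : t ≤ x j / v j := hi j (Finset.mem_univ j)
    calc t * v j ≤ (x j / v j) * v j := mul_le_mul_of_nonneg_right h1 (hv j).le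
    _ = x j := div_mul_cancel₀ _ (hv j).ne'
  have key : (E *ᵥ x) i ≤ t * (E *ᵥ v) i := by
    rw [mulVec_apply', mulVec_apply', Finset.mul_sum]
    refine Finset.sum_le_sum fun j _ => ?_
    rcases eq_or_ne i j with rfl | hij
    · rw [hxi]; ring_nf; exact le_of_eq rfl
    · have hEij := hZ i j hij
      have h2 := hge j
      nlinarith
  have h3 := hb i
  have h4 := hEv i
  nlinarith

lemma det_unit_of_semipos {n : ℕ} {E : Matrix (Fin n) (Fin n) ℝ} (hZ : IsZMatrix E)
    {v : Fin n → ℝ} (hv : ∀ i, 0 < v i) (hEv : ∀ i, 0 < (E *ᵥ v) i) : IsUnit E.det := by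
  rw [isUnit_iff_ne_zero]
  intro h0
  obtain ⟨y, hy0, hy⟩ := Matrix.exists_mulVec_eq_zero_iff.mpr h0
  have h1 : ∀ i, 0 ≤ y i := solution_nonneg hZ hv hEv (by intro i; rw [hy]; exact le_refl 0)
  have h2 : ∀ i, 0 ≤ (-y) i := solution_nonneg hZ hv hEv
    (by intro i; rw [Matrix.mulVec_neg, hy]; simp)
  exact hy0 (funext fun i => le_antisymm (by simpa using h2 i) (h1 i))

lemma inv_nonneg_of_semipos {n : ℕ} {E : Matrix (Fin n) (Fin n) ℝ} (hZ : IsZMatrix E)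
    {v : Fin n → ℝ} (hv : ∀ i, 0 < v i) (hEv : ∀ i, 0 < (E *ᵥ v) i) :
    ∀ i j, 0 ≤ E⁻¹ i j := by
  intro i j
  have hdet := det_unit_of_semipos hZ hv hEv
  have hinv := Matrix.mul_nonsing_inv E hdet
  refine solution_nonneg hZ hv hEv (x := fun k => E⁻¹ k j) ?_ i
  intro k
  have : (E *ᵥ fun k => E⁻¹ k j) k = (E * E⁻¹) k j := by
    rw [mulVec_apply', Matrix.mul_apply]
  rw [this, hinv, Matrix.one_apply]
  split <;> norm_num

lemma mulVec_pos_of_inv {n : ℕ} {P : Matrix (Fin n) (Fin n) ℝ} (hP : ∀ i j, 0 ≤ P i j)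
    (hdet : IsUnit P.det) {w : Fin n → ℝ} (hw : ∀ i, 0 < w i) (i : Fin n) :
    0 < (P *ᵥ w) i := by
  have hnn : 0 ≤ (P *ᵥ w) i := by
    rw [mulVec_apply']
    exact Finset.sum_nonneg fun j _ => mul_nonneg (hP i j) (hw j).le
  rcases hnn.lt_or_eq with h | h
  · exact h
  exfalso
  have hrow : ∀ j, P i j = 0 := by
    intro j
    have hz : ∑ j, P i j * w j = 0 := by rw [← mulVec_apply', ← h]
    have := (Finset.sum_eq_zero_iff_of_nonneg
      (fun j _ => mul_nonneg (hP i j) (hw j).le)).mp hz j (Finset.mem_univ j)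
    rcases mul_eq_zero.mp this with h' | h'
    · exact h'
    · exact absurd h' (hw j).ne'
  exact hdet.ne_zero (Matrix.det_eq_zero_of_row_eq_zero i hrow)

lemma cmp_mulVec_le {n : ℕ} (A : Matrix (Fin n) (Fin n) ℝ) (u : Fin n → ℝ) (i : Fin n) :
    (cmpMatrix A *ᵥ fun j => |u j|) i ≤ |(A *ᵥ u) i| := by
  rw [mulVec_apply', mulVec_apply']
  have hsplit : ∑ j, A i j * u j
      = A i i * u i + ∑ j ∈ Finset.univ.erase i, A i j * u j :=
    (Finset.add_sum_erase _ _ (Finset.mem_univ i)).symm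
  have h1 : |A i i * u i| - |∑ j ∈ Finset.univ.erase i, A i j * u j|
      ≤ |∑ j, A i j * u j| := by
    rw [hsplit]
    have := abs_add_le (A i i * u i + ∑ j ∈ Finset.univ.erase i, A i j * u j)
      (-(∑ j ∈ Finset.univ.erase i, A i j * u j))
    simp only [add_neg_cancel_right, abs_neg] at this
    linarith
  have h2 : |∑ j ∈ Finset.univ.erase i, A i j * u j|
      ≤ ∑ j ∈ Finset.univ.erase i, |A i j * u j| := Finset.abs_sum_le_sum_abs _ _
  have hL : ∑ j, cmpMatrix A i j * |u j|
      = |A i i * u i| - ∑ j ∈ Finset.univ.erase i, |A i j * u j| := by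
    rw [← Finset.add_sum_erase _ _ (Finset.mem_univ i)]
    have : ∀ j ∈ Finset.univ.erase i, cmpMatrix A i j * |u j| = -|A i j * u j| := by
      intro j hj
      have hij : i ≠ j := (Finset.ne_of_mem_erase hj).symm
      simp [cmpMatrix, hij, abs_mul]
    rw [Finset.sum_congr rfl this, Finset.sum_neg_distrib]
    simp [cmpMatrix, abs_mul]
    ring
  rw [hL]
  linarith

lemma mulVec_mono' {n : ℕ} {P : Matrix (Fin n) (Fin n) ℝ} (hP : ∀ i j, 0 ≤ P i j)
    {a b : Fin n → ℝ} (hab : ∀ i, a i ≤ b i) (i : Fin n) : (P *ᵥ a) i ≤ (P *ᵥ b) i := by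
  rw [mulVec_apply', mulVec_apply']
  exact Finset.sum_le_sum fun j _ => mul_le_mul_of_nonneg_left (hab j) (hP i j)

section HInv
variable {n : ℕ} {A : Matrix (Fin n) (Fin n) ℝ}
  (hcd : IsUnit (cmpMatrix A).det) (hG : ∀ i j, 0 ≤ (cmpMatrix A)⁻¹ i j)

include hcd hG in
lemma hmat_det_unit : IsUnit A.det := by
  rw [isUnit_iff_ne_zero]
  intro h0
  obtain ⟨y, hy0, hy⟩ := Matrix.exists_mulVec_eq_zero_iff.mpr h0
  have h1 : ∀ i, (cmpMatrix A *ᵥ fun j => |y j|) i ≤ 0 := by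
    intro i
    have := cmp_mulVec_le A y i
    rw [hy] at this
    simpa using this
  have h2 : ∀ i, |y i| ≤ 0 := by
    intro i
    have hid : ((cmpMatrix A)⁻¹ *ᵥ (cmpMatrix A *ᵥ fun j => |y j|)) = fun j => |y j| := by
      rw [Matrix.mulVec_mulVec, Matrix.nonsing_inv_mul _ hcd, Matrix.one_mulVec]
    calc |y i| = ((cmpMatrix A)⁻¹ *ᵥ (cmpMatrix A *ᵥ fun j => |y j|)) i := by rw [hid]
    _ ≤ ((cmpMatrix A)⁻¹ *ᵥ (0 : Fin n → ℝ)) i := mulVec_mono' hG h1 i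
    _ = 0 := by rw [Matrix.mulVec_zero]; rfl
  exact hy0 (funext fun i => abs_nonpos_iff.mp (h2 i))

include hcd hG in
lemma abs_inv_le_cmp_inv : ∀ i j, |A⁻¹ i j| ≤ (cmpMatrix A)⁻¹ i j := by
  intro i j
  have hdet := hmat_det_unit hcd hG
  have hcol : (A *ᵥ fun k => A⁻¹ k j) = fun k => (1 : Matrix (Fin n) (Fin n) ℝ) k j := by
    funext k
    rw [mulVec_apply', ← Matrix.mul_apply, Matrix.mul_nonsing_inv _ hdet]
  have h1 : ∀ i, (cmpMatrix A *ᵥ fun k => |A⁻¹ k j|) i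
      ≤ (fun k => (1 : Matrix (Fin n) (Fin n) ℝ) k j) i := by
    intro i
    have := cmp_mulVec_le A (fun k => A⁻¹ k j) i
    rw [hcol] at this
    refine this.trans ?_
    simp only [Matrix.one_apply]
    split <;> simp
  have hid : ((cmpMatrix A)⁻¹ *ᵥ (cmpMatrix A *ᵥ fun k => |A⁻¹ k j|)) = fun k => |A⁻¹ k j| := by
    rw [Matrix.mulVec_mulVec, Matrix.nonsing_inv_mul _ hcd, Matrix.one_mulVec]
  calc |A⁻¹ i j| = ((cmpMatrix A)⁻¹ *ᵥ (cmpMatrix A *ᵥ fun k => |A⁻¹ k j|)) i := by rw [hid]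
  _ ≤ ((cmpMatrix A)⁻¹ *ᵥ fun k => (1 : Matrix (Fin n) (Fin n) ℝ) k j) i := mulVec_mono' hG h1 i
  _ = (cmpMatrix A)⁻¹ i j := by
      rw [mulVec_apply']
      simp [Matrix.one_apply]
end HInv

lemma charpoly_eval' {n : ℕ} (A : Matrix (Fin n) (Fin n) ℂ) (μ : ℂ) :
    A.charpoly.eval μ = (Matrix.diagonal (fun _ => μ) - A).det := by
  rw [Matrix.charpoly, ← Polynomial.coe_evalRingHom, RingHom.map_det]
  congr 1
  ext i j
  rcases eq_or_ne i j with rfl | hij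
  · simp [Matrix.charmatrix_apply_eq]
  · simp [Matrix.charmatrix_apply_ne _ _ _ hij, Matrix.diagonal_apply_ne _ hij]

theorem stmt14 {n : ℕ} (A₁ M₁ N₁ L₁ Ω₁ : Matrix (Fin n) (Fin n) ℝ)
    (hA : IsHPlusMatrix A₁)
    (hL : L₁ = strictLower A₁) (hΩ : posDiag Ω₁)
    (hsplit : A₁ = (M₁ + 1 - L₁) - (N₁ + 1 - L₁))
    (hcompat : cmpMatrix A₁ = cmpMatrix (M₁ + 1 - L₁) - matAbs (N₁ + 1 - L₁))
    (hlt : ∀ i, Ω₁ i i < A₁ i i)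
    (hM : IsMMatrix (cmpMatrix A₁ + (2 : ℝ) • Ω₁ - Matrix.diagonal (fun i => A₁ i i)
      - matAbs (strictLower A₁ + strictUpper A₁))) :
    specRad (matAbs ((M₁ + Ω₁ + 1 - L₁)⁻¹) *
      (matAbs (N₁ + 1 - L₁) + matAbs (Ω₁ - A₁))) < 1 := by
  have hApos := hA.2
  obtain ⟨hΩoff, hΩpos⟩ := hΩ
  set Mm := M₁ + 1 - L₁ with hMm
  set Nn := N₁ + 1 - L₁ with hNn
  set X := M₁ + Ω₁ + 1 - L₁ with hX
  set W := cmpMatrix A₁ + (2 : ℝ) • Ω₁ - Matrix.diagonal (fun i => A₁ i i)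
      - matAbs (strictLower A₁ + strictUpper A₁) with hWdef
  set R := matAbs Nn + matAbs (Ω₁ - A₁) with hRdef
  set T := matAbs X⁻¹ * R with hTdef
  obtain ⟨hWZ, hWdet, hWinv⟩ := hM
  have hXM : X = Mm + Ω₁ := by rw [hX, hMm]; abel
  have hAMN : ∀ i j, A₁ i j = Mm i j - Nn i j := by
    intro i j
    rw [hsplit]
    simp [Matrix.sub_apply]
  have hcomp : ∀ i j, cmpMatrix Mm i j = cmpMatrix A₁ i j + |Nn i j| := by
    intro i j
    have h := congrFun (congrFun hcompat i) j
    simp only [Matrix.sub_apply, matAbs, Matrix.of_apply] at h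
    linarith
  have hMii : ∀ i, 0 < Mm i i := by
    intro i
    have h1 : |Mm i i| = |A₁ i i| + |Nn i i| := by
      have := hcomp i i
      simpa [cmpMatrix] using this
    have h2 : A₁ i i = Mm i i - Nn i i := hAMN i i
    have h3 := hApos i
    rw [abs_of_pos h3] at h1
    rcases abs_cases (Mm i i) with ⟨e1, e2⟩ | ⟨e1, e2⟩ <;>
      rcases abs_cases (Nn i i) with ⟨f1, f2⟩ | ⟨f1, f2⟩ <;> linarith
  have hWe : ∀ i j, W i j = if i = j then 2 * Ω₁ i i else -(2 * |A₁ i j|) := by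
    intro i j
    rcases eq_or_ne i j with rfl | hij
    · have h0 : strictLower A₁ i i + strictUpper A₁ i i = 0 := by
        simp [strictLower, strictUpper]
      simp only [hWdef, Matrix.sub_apply, Matrix.add_apply, Matrix.smul_apply, cmpMatrix,
        matAbs, Matrix.of_apply, Matrix.diagonal_apply_eq, if_pos rfl, h0, abs_zero,
        smul_eq_mul]
      rw [abs_of_pos (hApos i)]
      simp only [if_true]
      ring
    · have hvij : (i : ℕ) ≠ (j : ℕ) := fun h => hij (Fin.ext h)
      have hB : strictLower A₁ i j + strictUpper A₁ i j = A₁ i j := by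
        simp only [strictLower, strictUpper, Matrix.of_apply]
        rcases hvij.lt_or_gt with h | h
        · rw [if_neg (by omega), if_pos h, zero_add]
        · rw [if_pos h, if_neg (by omega), add_zero]
      simp only [hWdef, Matrix.sub_apply, Matrix.add_apply, Matrix.smul_apply, cmpMatrix,
        matAbs, Matrix.of_apply, Matrix.diagonal_apply_ne _ hij, if_neg hij,
        hΩoff i j hij, hB, smul_eq_mul]
      ring
  -- the positive vector v
  set v := W⁻¹ *ᵥ (fun _ => (1 : ℝ)) with hvdef
  have hWv : W *ᵥ v = fun _ => (1 : ℝ) := by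
    rw [hvdef, Matrix.mulVec_mulVec, Matrix.mul_nonsing_inv _ hWdet, Matrix.one_mulVec]
  have hWinvdet : IsUnit W⁻¹.det := by
    have h : W⁻¹.det * W.det = 1 := by
      rw [← Matrix.det_mul, Matrix.nonsing_inv_mul _ hWdet, Matrix.det_one]
    exact IsUnit.of_mul_eq_one _ h
  have hvpos : ∀ i, 0 < v i := fun i =>
    mulVec_pos_of_inv hWinv hWinvdet (fun _ => one_pos) i
  -- comparison matrix of X
  have hXZ : IsZMatrix (cmpMatrix X) := by
    intro i j hij
    simp only [cmpMatrix, Matrix.of_apply, if_neg hij]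
    exact neg_nonpos.mpr (abs_nonneg _)
  have hcmpX : ∀ i j, cmpMatrix X i j = cmpMatrix A₁ i j + |Nn i j| + Ω₁ i j := by
    intro i j
    rcases eq_or_ne i j with rfl | hij
    · have hMX : X i i = Mm i i + Ω₁ i i := by rw [hXM]; simp [Matrix.add_apply]
      have h2 := hcomp i i
      have h3 := hMii i
      have h4 := hΩpos i
      have h5 : cmpMatrix Mm i i = |Mm i i| := by simp [cmpMatrix]
      rw [h5, abs_of_pos h3] at h2
      have h6 : cmpMatrix X i i = |Mm i i + Ω₁ i i| := by simp [cmpMatrix, hMX]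
      rw [h6, abs_of_pos (by linarith)]
      have h7 : cmpMatrix A₁ i i = |A₁ i i| := by simp [cmpMatrix]
      linarith
    · have hMX : X i j = Mm i j := by
        rw [hXM]; simp [Matrix.add_apply, hΩoff i j hij]
      have h2 := hcomp i j
      simp only [cmpMatrix, Matrix.of_apply, if_neg hij] at h2 ⊢
      rw [hMX, hΩoff i j hij]
      linarith
  have hWle : ∀ i j, W i j ≤ cmpMatrix X i j := by
    intro i j
    rw [hWe, hcmpX]
    rcases eq_or_ne i j with rfl | hij
    · have h7 : cmpMatrix A₁ i i = |A₁ i i| := by simp [cmpMatrix]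
      rw [if_pos rfl, h7, abs_of_pos (hApos i)]
      have := hlt i
      have := abs_nonneg (Nn i i)
      linarith
    · have h7 : cmpMatrix A₁ i j = -|A₁ i j| := by simp [cmpMatrix, hij]
      rw [if_neg hij, h7, hΩoff i j hij]
      have := abs_nonneg (Nn i j)
      have := abs_nonneg (A₁ i j)
      linarith
  have hcmpXv : ∀ i, 0 < (cmpMatrix X *ᵥ v) i := by
    intro i
    have h1 : (W *ᵥ v) i ≤ (cmpMatrix X *ᵥ v) i := by
      rw [mulVec_apply', mulVec_apply']
      exact Finset.sum_le_sum fun j _ =>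
        mul_le_mul_of_nonneg_right (hWle i j) (hvpos j).le
    have h2 : (W *ᵥ v) i = 1 := congrFun hWv i
    linarith
  have hcd : IsUnit (cmpMatrix X).det := det_unit_of_semipos hXZ hvpos hcmpXv
  have hG : ∀ i j, 0 ≤ (cmpMatrix X)⁻¹ i j := inv_nonneg_of_semipos hXZ hvpos hcmpXv
  have habs : ∀ i j, |X⁻¹ i j| ≤ (cmpMatrix X)⁻¹ i j := abs_inv_le_cmp_inv hcd hG
  have hGdet : IsUnit ((cmpMatrix X)⁻¹).det := by
    have h : ((cmpMatrix X)⁻¹).det * (cmpMatrix X).det = 1 := by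
      rw [← Matrix.det_mul, Matrix.nonsing_inv_mul _ hcd, Matrix.det_one]
    exact IsUnit.of_mul_eq_one _ h
  -- R = cmpMatrix X - W entrywise
  have hRW : ∀ i j, R i j = cmpMatrix X i j - W i j := by
    intro i j
    rw [hcmpX, hWe]
    rcases eq_or_ne i j with rfl | hij
    · have h7 : cmpMatrix A₁ i i = |A₁ i i| := by simp [cmpMatrix]
      have h8 : R i i = |Nn i i| + |Ω₁ i i - A₁ i i| := by
        simp [hRdef, Matrix.add_apply, matAbs, Matrix.sub_apply]
      have h9 : |Ω₁ i i - A₁ i i| = A₁ i i - Ω₁ i i := by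
        rw [abs_of_neg (show Ω₁ i i - A₁ i i < 0 by linarith [hlt i])]; ring
      rw [h8, h9, if_pos rfl, h7, abs_of_pos (hApos i)]
      ring
    · have h7 : cmpMatrix A₁ i j = -|A₁ i j| := by simp [cmpMatrix, hij]
      have h8 : R i j = |Nn i j| + |Ω₁ i j - A₁ i j| := by
        simp [hRdef, Matrix.add_apply, matAbs, Matrix.sub_apply]
      rw [h8, if_neg hij, h7, hΩoff i j hij, zero_sub, abs_neg]
      ring
  have hRnn : ∀ i j, 0 ≤ R i j := by
    intro i j
    simp only [hRdef, Matrix.add_apply, matAbs, Matrix.of_apply]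
    positivity
  have hRv0 : ∀ j, 0 ≤ (R *ᵥ v) j := by
    intro j
    rw [mulVec_apply']
    exact Finset.sum_nonneg fun k _ => mul_nonneg (hRnn j k) (hvpos k).le
  have hT0 : ∀ i j, 0 ≤ T i j := by
    intro i j
    rw [hTdef, Matrix.mul_apply]
    exact Finset.sum_nonneg fun k _ =>
      mul_nonneg (by simp [matAbs]) (hRnn k j)
  -- T v < v
  have hRvid : R *ᵥ v = fun k => (cmpMatrix X *ᵥ v) k - 1 := by
    funext k
    have h1 : (R *ᵥ v) k = (cmpMatrix X *ᵥ v) k - (W *ᵥ v) k := by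
      rw [mulVec_apply', mulVec_apply', mulVec_apply', ← Finset.sum_sub_distrib]
      exact Finset.sum_congr rfl fun j _ => by rw [hRW k j]; ring
    rw [h1, congrFun hWv k]
  have hTv : ∀ i, (T *ᵥ v) i < v i := by
    intro i
    have e1 : (T *ᵥ v) i = ((matAbs X⁻¹) *ᵥ (R *ᵥ v)) i := by
      rw [hTdef, ← Matrix.mulVec_mulVec]
    have e2 : ((matAbs X⁻¹) *ᵥ (R *ᵥ v)) i ≤ ((cmpMatrix X)⁻¹ *ᵥ (R *ᵥ v)) i := by
      rw [mulVec_apply', mulVec_apply']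
      refine Finset.sum_le_sum fun j _ => ?_
      refine mul_le_mul_of_nonneg_right ?_ (hRv0 j)
      simpa [matAbs] using habs i j
    have e3 : ((cmpMatrix X)⁻¹ *ᵥ (R *ᵥ v)) i
        = v i - ((cmpMatrix X)⁻¹ *ᵥ fun _ => (1 : ℝ)) i := by
      have h4 : R *ᵥ v = (cmpMatrix X *ᵥ v) - (fun _ => (1 : ℝ)) := by
        rw [hRvid]; funext k; simp
      rw [h4, Matrix.mulVec_sub]
      have h5 : (cmpMatrix X)⁻¹ *ᵥ (cmpMatrix X *ᵥ v) = v := by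
        rw [Matrix.mulVec_mulVec, Matrix.nonsing_inv_mul _ hcd, Matrix.one_mulVec]
      rw [Pi.sub_apply, h5]
    have e4 : 0 < ((cmpMatrix X)⁻¹ *ᵥ fun _ => (1 : ℝ)) i :=
      mulVec_pos_of_inv hG hGdet (fun _ => one_pos) i
    rw [e1] at *
    linarith [e2, e3.le, e3.ge]
  -- spectral radius bound
  unfold specRad
  rcases Nat.eq_zero_or_pos n with hn | hn
  · have hempty : {x : ℝ | ∃ μ : ℂ, (T.map Complex.ofReal).charpoly.IsRoot μ
        ∧ x = ‖μ‖} = ∅ := by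
      ext x
      simp only [Set.mem_setOf_eq, Set.mem_empty_iff_false, iff_false, not_exists]
      rintro μ ⟨hroot, -⟩
      subst hn
      have h1 : (T.map Complex.ofReal).charpoly = 1 := by
        rw [Matrix.charpoly, Matrix.det_isEmpty]
      rw [h1] at hroot
      simp [Polynomial.IsRoot] at hroot
    rw [hempty, Real.sSup_empty]
    norm_num
  · have hne : (Finset.univ : Finset (Fin n)).Nonempty := ⟨⟨0, hn⟩, Finset.mem_univ _⟩
    have i0 : Fin n := ⟨0, hn⟩
    set c := Finset.univ.sup' hne (fun i => max 0 ((T *ᵥ v) i / v i)) with hcdef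
    have hc1 : c < 1 := by
      rw [hcdef, Finset.sup'_lt_iff hne]
      intro i _
      exact max_lt one_pos ((div_lt_one (hvpos i)).mpr (hTv i))
    have hc0 : 0 ≤ c := by
      rw [hcdef]
      exact le_trans (le_max_left _ _)
        (Finset.le_sup' (fun i => max 0 ((T *ᵥ v) i / v i)) (Finset.mem_univ i0))
    have hcv : ∀ i, (T *ᵥ v) i ≤ c * v i := by
      intro i
      have h1 : (T *ᵥ v) i / v i ≤ c := by
        rw [hcdef]
        exact le_trans (le_max_right _ _)
          (Finset.le_sup' (fun i => max 0 ((T *ᵥ v) i / v i)) (Finset.mem_univ i))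
      calc (T *ᵥ v) i = ((T *ᵥ v) i / v i) * v i := (div_mul_cancel₀ _ (hvpos i).ne').symm
      _ ≤ c * v i := mul_le_mul_of_nonneg_right h1 (hvpos i).le
    refine lt_of_le_of_lt (Real.sSup_le ?_ hc0) hc1
    rintro x ⟨μ, hroot, rfl⟩
    have hdet0 : (Matrix.diagonal (fun _ : Fin n => μ) - T.map Complex.ofReal).det = 0 := by
      rw [← charpoly_eval' (T.map Complex.ofReal) μ]
      exact hroot
    obtain ⟨y, hy0, hy⟩ := Matrix.exists_mulVec_eq_zero_iff.mpr hdet0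
    have heig : ∀ i, μ * y i = ∑ j, (T i j : ℂ) * y j := by
      intro i
      have h := congrFun hy i
      rw [Matrix.sub_mulVec] at h
      simp only [Pi.sub_apply, Pi.zero_apply] at h
      have hd : (Matrix.diagonal (fun _ : Fin n => μ) *ᵥ y) i = μ * y i := by
        simp [Matrix.mulVec_diagonal]
      have hm : ((T.map Complex.ofReal) *ᵥ y) i = ∑ j, (T i j : ℂ) * y j := by
        rw [mulVec_apply']
        rfl
      rw [hd, hm] at h
      exact sub_eq_zero.mp h
    obtain ⟨i, -, hi⟩ := Finset.exists_max_image Finset.univ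
      (fun j => ‖y j‖ / v j) hne
    obtain ⟨k, hk⟩ : ∃ k, y k ≠ 0 := by
      by_contra hcc
      push_neg at hcc
      exact hy0 (funext hcc)
    set s := ‖y i‖ / v i with hs
    have hs0 : 0 < s :=
      lt_of_lt_of_le (div_pos (norm_pos_iff.mpr hk) (hvpos k)) (hi k (Finset.mem_univ k))
    have hsyi : ‖y i‖ = s * v i := by
      rw [hs, div_mul_cancel₀ _ (hvpos i).ne']
    have hyb : ∀ j, ‖y j‖ ≤ s * v j := by
      intro j
      have h1 : ‖y j‖ / v j ≤ s := hi j (Finset.mem_univ j)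
      calc ‖y j‖ = (‖y j‖ / v j) * v j :=
        (div_mul_cancel₀ _ (hvpos j).ne').symm
      _ ≤ s * v j := mul_le_mul_of_nonneg_right h1 (hvpos j).le
    have key : ‖μ‖ * (s * v i) ≤ c * (s * v i) := by
      calc ‖μ‖ * (s * v i) = ‖μ * y i‖ := by rw [norm_mul, hsyi]
      _ = ‖∑ j, (T i j : ℂ) * y j‖ := by rw [heig i]
      _ ≤ ∑ j, ‖(T i j : ℂ) * y j‖ := norm_sum_le _ _
      _ = ∑ j, T i j * ‖y j‖ := by
          refine Finset.sum_congr rfl fun j _ => ?_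
          rw [norm_mul, Complex.norm_real, Real.norm_eq_abs, abs_of_nonneg (hT0 i j)]
      _ ≤ ∑ j, T i j * (s * v j) := Finset.sum_le_sum fun j _ =>
          mul_le_mul_of_nonneg_left (hyb j) (hT0 i j)
      _ = s * (T *ᵥ v) i := by
          rw [mulVec_apply', Finset.mul_sum]
          exact Finset.sum_congr rfl fun j _ => by ring
      _ ≤ s * (c * v i) := mul_le_mul_of_nonneg_left (hcv i) hs0.le
      _ = c * (s * v i) := by ring
    exact le_of_mul_le_mul_right key (mul_pos hs0 (hvpos i))
end

section
/- If A₁ is a P-matrix, then for any q ∈ R^n the linear complementarity problem LCP(q, A₁) has a unique solution. -/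
open Matrix BigOperators Filter
open Topology

def PMinors {m : Type*} [Fintype m] [DecidableEq m] (A : Matrix m m ℝ) : Prop :=
  ∀ s : Finset m, 0 < (A.submatrix (fun i : s => (i : m)) (fun i : s => (i : m))).det

def SignP {m : Type*} [Fintype m] (A : Matrix m m ℝ) : Prop :=
  ∀ x : m → ℝ, x ≠ 0 → ∃ i, 0 < x i * (A.mulVec x) i

def LCPSol {m : Type*} [Fintype m] (A : Matrix m m ℝ) (q z : m → ℝ) : Prop :=
  (∀ i, 0 ≤ z i) ∧ (∀ i, 0 ≤ (A.mulVec z + q) i) ∧ ∀ i, z i * (A.mulVec z + q) i = 0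


lemma pminors_det_pos {m : Type*} [Fintype m] [DecidableEq m] {A : Matrix m m ℝ}
    (h : PMinors A) : 0 < A.det := by
  have h2 := h Finset.univ
  rw [show (fun i : (Finset.univ : Finset m) => (i : m))
      = ⇑(Equiv.subtypeUnivEquiv (fun x : m => Finset.mem_univ x)) from funext fun x => rfl,
    Matrix.det_submatrix_equiv_self] at h2
  exact h2

lemma pminors_submatrix {m m' : Type*} [Fintype m] [DecidableEq m] [Fintype m'] [DecidableEq m']
    {A : Matrix m m ℝ} (h : PMinors A) (f : m' → m) (hf : Function.Injective f) :
    PMinors (A.submatrix f f) := by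
  intro s
  classical
  have h2 := h (s.image f)
  rw [← Matrix.det_submatrix_equiv_self (Equiv.ofBijective
      (fun x : {x // x ∈ s} => (⟨f x, Finset.mem_image_of_mem f x.2⟩ : {x // x ∈ s.image f}))
      ⟨fun a b hab => Subtype.ext (hf (congrArg Subtype.val hab)),
       fun y => by
        obtain ⟨a, ha, hfa⟩ := Finset.mem_image.1 y.2
        exact ⟨⟨a, ha⟩, Subtype.ext hfa⟩⟩)] at h2
  rw [Matrix.submatrix_submatrix] at h2
  exact h2

lemma det_updateColumn_single {m : Type*} [Fintype m] [DecidableEq m]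
    (M : Matrix m m ℝ) (i : m) :
    (M.updateCol i (Pi.single i 1)).det
      = (M.submatrix (fun a : {a // ¬ a = i} => (a : m)) (fun a : {a // ¬ a = i} => (a : m))).det := by
  classical
  set N := M.updateCol i (Pi.single i 1) with hN
  rw [← Matrix.det_submatrix_equiv_self (Equiv.sumCompl (fun a : m => a = i)) N]
  haveI : Unique {a // a = i} := ⟨⟨⟨i, rfl⟩⟩, fun x => Subtype.ext x.2⟩
  have hblocks : N.submatrix ⇑(Equiv.sumCompl (fun a : m => a = i)) ⇑(Equiv.sumCompl (fun a : m => a = i))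
      = fromBlocks (Matrix.of fun _ _ => (1:ℝ))
          (Matrix.of fun (_ : {a // a = i}) (b : {a // ¬ a = i}) => M i (b:m)) 0
          (M.submatrix (fun a : {a // ¬ a = i} => (a : m)) (fun a : {a // ¬ a = i} => (a : m))) := by
    ext a b
    rcases a with ⟨a, rfl⟩ | ⟨a, ha⟩
    · rcases b with ⟨b, rfl⟩ | ⟨b, hb⟩
      · simp [hN, Matrix.fromBlocks, Equiv.sumCompl, Matrix.updateCol_apply]
      · simp [hN, Matrix.fromBlocks, Equiv.sumCompl, Matrix.updateCol_apply, hb]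
    · rcases b with ⟨b, rfl⟩ | ⟨b, hb⟩
      · simp [hN, Matrix.fromBlocks, Equiv.sumCompl, Matrix.updateCol_apply,
          Pi.single_apply, ha]
      · simp [hN, Matrix.fromBlocks, Equiv.sumCompl, Matrix.updateCol_apply, hb]
  rw [hblocks, Matrix.det_fromBlocks_zero₂₁, Matrix.det_unique]
  simp

lemma det_add_diagonal_pos_aux : ∀ (N : ℕ) (m : Type) [Fintype m] [DecidableEq m]
    (A : Matrix m m ℝ), PMinors A → Fintype.card m ≤ N →
    ∀ d : m → ℝ, (∀ i, 0 ≤ d i) → 0 < (A + diagonal d).det := by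
  intro N
  induction N with
  | zero =>
    intro m _ _ A _ hcard d _
    haveI : IsEmpty m := Fintype.card_eq_zero_iff.mp (Nat.le_zero.mp hcard)
    simp [Matrix.det_isEmpty]
  | succ N IHN =>
    intro m _ _ A hA hcard
    suffices H : ∀ s : Finset m, ∀ d : m → ℝ, (∀ i, 0 ≤ d i) → (∀ i, i ∉ s → d i = 0) →
        0 < (A + diagonal d).det by
      intro d hd
      exact H Finset.univ d hd (fun i hi => absurd (Finset.mem_univ i) hi)
    intro s
    induction s using Finset.induction_on with
    | empty =>
      intro d _ h0
      have hd0 : d = 0 := funext fun i => h0 i (Finset.notMem_empty i)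
      have : A + diagonal d = A := by
        rw [hd0]; ext a b; simp [Matrix.diagonal_apply]
      rw [this]
      exact pminors_det_pos hA
    | @insert i s₀ hi IH2 =>
      intro d hd h0
      set d' : m → ℝ := Function.update d i 0 with hd'
      have key : A + diagonal d = (A + diagonal d').updateCol i
          ((fun a => (A + diagonal d') a i) + d i • (Pi.single i 1 : m → ℝ)) := by
        ext a b
        simp only [Matrix.add_apply, Matrix.diagonal_apply, Matrix.updateCol_apply,
          Pi.add_apply, Pi.smul_apply, Pi.single_apply, smul_eq_mul, hd',
          Function.update_apply]
        split_ifs <;> simp_all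
      rw [key, Matrix.det_updateCol_add, Matrix.det_updateCol_smul,
        Matrix.updateCol_eq_self, det_updateColumn_single]
      have hd'nonneg : ∀ j, 0 ≤ d' j := fun j => by
        by_cases h : j = i
        · subst h; simp [hd']
        · simpa [hd', Function.update_of_ne h] using hd j
      have t1 : 0 < (A + diagonal d').det := by
        refine IH2 d' hd'nonneg (fun j hj => ?_)
        by_cases h : j = i
        · subst h; simp [hd']
        · rw [hd', Function.update_of_ne h]
          exact h0 j (by simp [h, hj])
      have hsub : (A + diagonal d').submatrix (fun a : {a // ¬ a = i} => (a : m))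
            (fun a : {a // ¬ a = i} => (a : m))
          = A.submatrix (fun a : {a // ¬ a = i} => (a : m)) (fun a : {a // ¬ a = i} => (a : m))
            + diagonal (fun a : {a // ¬ a = i} => d' (a : m)) := by
        ext a b
        by_cases h : a = b
        · subst h; simp [Matrix.diagonal_apply]
        · have : (a : m) ≠ (b : m) := fun hh => h (Subtype.ext hh)
          simp [Matrix.diagonal_apply, h, this]
      have hcard' : Fintype.card {a // ¬ a = i} ≤ N := by
        have h1 : Fintype.card {a // ¬ a = i}
            = Fintype.card m - Fintype.card {a : m // a = i} :=
          Fintype.card_subtype_compl _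
        rw [h1, Fintype.card_subtype_eq]
        have : 1 ≤ Fintype.card m := Fintype.card_pos_iff.mpr ⟨i⟩
        omega
      have t2 : 0 < ((A + diagonal d').submatrix (fun a : {a // ¬ a = i} => (a : m))
          (fun a : {a // ¬ a = i} => (a : m))).det := by
        rw [hsub]
        exact IHN {a // ¬ a = i} (A.submatrix (fun a : {a // ¬ a = i} => (a : m))
            (fun a : {a // ¬ a = i} => (a : m)))
          (pminors_submatrix hA _ Subtype.val_injective) hcard'
          (fun a : {a // ¬ a = i} => d' (a : m)) (fun a => hd'nonneg _)
      have := mul_nonneg (hd i) (le_of_lt t2)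
      linarith

/-- The P-matrix sign property. -/
lemma pminors_signP {n : ℕ} {A : Matrix (Fin n) (Fin n) ℝ} (hA : PMinors A) : SignP A := by
  intro x hx
  by_contra hcon
  push_neg at hcon
  classical
  set S : Finset (Fin n) := Finset.univ.filter (fun i => x i ≠ 0) with hS
  set c : {i // i ∈ S} → Fin n := fun i => (i : Fin n) with hc
  set B : Matrix {i // i ∈ S} {i // i ∈ S} ℝ := A.submatrix c c with hB
  set y : {i // i ∈ S} → ℝ := fun i => x (c i) with hy
  have hxS : ∀ j : {i // i ∈ S}, x (c j) ≠ 0 := fun j => (Finset.mem_filter.1 j.2).2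
  -- B *ᵥ y = (A *ᵥ x) restricted
  have hBy : ∀ j, (B *ᵥ y) j = (A *ᵥ x) (c j) := by
    intro j
    show ∑ k : {i // i ∈ S}, A (c j) (c k) * x (c k) = ∑ k, A (c j) k * x k
    have h1 : ∑ k ∈ S, A (c j) k * x k = ∑ k : Fin n, A (c j) k * x k :=
      Finset.sum_subset (Finset.subset_univ S) (fun k _ hk => by
        have : x k = 0 := by
          by_contra h
          exact hk (Finset.mem_filter.2 ⟨Finset.mem_univ k, h⟩)
        simp [this])
    rw [← h1, ← Finset.sum_coe_sort S (fun k => A (c j) k * x k)]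
  set d : {i // i ∈ S} → ℝ := fun j => -((A *ᵥ x) (c j) / x (c j)) with hd
  have hdnn : ∀ j, 0 ≤ d j := by
    intro j
    have h1 : x (c j) * (A *ᵥ x) (c j) ≤ 0 := hcon (c j)
    have h2 : (A *ᵥ x) (c j) / x (c j) = (x (c j) * (A *ᵥ x) (c j)) / (x (c j) * x (c j)) := by
      rw [mul_div_mul_left _ _ (hxS j)]
    have h3 : (A *ᵥ x) (c j) / x (c j) ≤ 0 := by
      rw [h2]
      exact div_nonpos_of_nonpos_of_nonneg h1 (mul_self_nonneg _)
    simpa [hd] using h3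
  have hker : (B + diagonal d) *ᵥ y = 0 := by
    funext j
    rw [Matrix.add_mulVec]
    simp only [Pi.add_apply, Matrix.mulVec_diagonal, Pi.zero_apply]
    rw [hBy j]
    have : d j * y j = -(A *ᵥ x) (c j) := by
      rw [hd, hy]
      field_simp [hxS j]
    rw [this]; ring
  have hyne : y ≠ 0 := by
    obtain ⟨i0, hi0⟩ := Function.ne_iff.1 hx
    have hi0' : i0 ∈ S := Finset.mem_filter.2 ⟨Finset.mem_univ _, by simpa using hi0⟩
    intro h
    exact (hxS ⟨i0, hi0'⟩) (congrFun h ⟨i0, hi0'⟩)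
  have hdet0 : (B + diagonal d).det = 0 :=
    Matrix.exists_mulVec_eq_zero_iff.1 ⟨y, hyne, hker⟩
  have hdetpos : 0 < (B + diagonal d).det :=
    det_add_diagonal_pos_aux (Fintype.card {i // i ∈ S}) _ _
      (pminors_submatrix hA c (fun a b hab => Subtype.ext hab)) le_rfl d hdnn
  rw [hdet0] at hdetpos
  exact lt_irrefl 0 hdetpos

/-- Componentwise LCP solution. -/
lemma lcp_unique {m : Type*} [Fintype m] {A : Matrix m m ℝ} (hA : SignP A) {q z z' : m → ℝ}
    (h : LCPSol A q z) (h' : LCPSol A q z') : z = z' := by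
  by_contra hne
  have hx : z - z' ≠ 0 := fun h0 => hne (by rwa [sub_eq_zero] at h0)
  obtain ⟨i, hi⟩ := hA (z - z') hx
  have hAx : A.mulVec (z - z') = (A.mulVec z + q) - (A.mulVec z' + q) := by
    rw [Matrix.mulVec_sub]; ring_nf
  rw [hAx] at hi
  set w := A.mulVec z + q
  set w' := A.mulVec z' + q
  have expand : (z - z') i * (w - w') i = -(z i * w' i + z' i * w i) := by
    have h1 : z i * w i = 0 := h.2.2 i
    have h2 : z' i * w' i = 0 := h'.2.2 i
    simp only [Pi.sub_apply]
    nlinarith [h1, h2]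
  rw [expand] at hi
  have t1 : 0 ≤ z i * w' i := mul_nonneg (h.1 i) (h'.2.1 i)
  have t2 : 0 ≤ z' i * w i := mul_nonneg (h'.1 i) (h.2.1 i)
  linarith

lemma noblow {m : Type*} [Fintype m] {A : Matrix m m ℝ} (hSP : SignP A)
    (C M : ℝ) (q z : ℕ → m → ℝ) (P : m → Prop)
    (hq : ∀ k, ‖q k‖ ≤ C)
    (hz : ∀ k i, 0 ≤ z k i)
    (h1 : ∀ k i, P i → 0 ≤ (A.mulVec (z k) + q k) i ∧ z k i * (A.mulVec (z k) + q k) i = 0)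
    (h2 : ∀ k i, ¬ P i → (A.mulVec (z k) + q k) i ≤ M)
    (hnorm : ∀ k : ℕ, (k : ℝ) ≤ ‖z k‖) : False := by
  classical
  have hrpos : ∀ k : ℕ, 0 < ‖z (k + 1)‖ := fun k =>
    lt_of_lt_of_le (Nat.cast_pos.mpr (Nat.succ_pos k)) (by simpa using hnorm (k + 1))
  set r : ℕ → ℝ := fun k => ‖z (k + 1)‖ with hr
  set v : ℕ → m → ℝ := fun k => (r k)⁻¹ • z (k + 1) with hv
  have hv1 : ∀ k, ‖v k‖ = 1 := by
    intro k
    rw [hv]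
    simp only [norm_smul, norm_inv, norm_norm]
    rw [Real.norm_eq_abs, abs_of_pos (hrpos k)]
    exact inv_mul_cancel₀ (ne_of_gt (hrpos k))
  have hvball : ∀ k, v k ∈ Metric.closedBall (0 : m → ℝ) 1 := by
    intro k
    simpa [Metric.mem_closedBall, dist_zero_right] using le_of_eq (hv1 k)
  obtain ⟨u, _, φ, hφmono, hφtend⟩ :=
    tendsto_subseq_of_bounded (Metric.isBounded_closedBall (x := (0 : m → ℝ)) (r := 1)) hvball
  -- r (φ k) → ∞
  have hrtend : Tendsto (fun k => r (φ k)) atTop atTop := by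
    refine tendsto_atTop_mono (fun k => ?_) tendsto_natCast_atTop_atTop
    calc (k : ℝ) ≤ (φ k : ℝ) := by exact_mod_cast hφmono.le_apply
        _ ≤ ((φ k + 1 : ℕ) : ℝ) := by exact_mod_cast Nat.le_succ _
        _ ≤ ‖z (φ k + 1)‖ := hnorm _
  have hrinv : Tendsto (fun k => (r (φ k))⁻¹) atTop (𝓝 0) :=
    tendsto_inv_atTop_zero.comp hrtend
  have hrinv_nonneg : ∀ k, 0 ≤ (r (φ k))⁻¹ := fun k => inv_nonneg.2 (le_of_lt (hrpos _))
  -- norm of u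
  have hunorm : ‖u‖ = 1 := by
    have h1' : Tendsto (fun k => ‖v (φ k)‖) atTop (𝓝 ‖u‖) := hφtend.norm
    have h2' : (fun k => ‖v (φ k)‖) = fun _ => (1 : ℝ) := funext fun k => hv1 (φ k)
    rw [h2'] at h1'
    exact tendsto_nhds_unique h1' tendsto_const_nhds
  have hune : u ≠ 0 := fun h => by simp [h] at hunorm
  -- componentwise convergence
  have hvi : ∀ i, Tendsto (fun k => v (φ k) i) atTop (𝓝 (u i)) := fun i =>
    ((continuous_apply i).tendsto u).comp hφtend
  have hu_nonneg : ∀ i, 0 ≤ u i := fun i =>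
    ge_of_tendsto' (hvi i) (fun k => mul_nonneg (hrinv_nonneg k) (hz _ i))
  -- A.mulVec continuity componentwise
  have hmv : ∀ (x : m → ℝ) i, (A.mulVec x) i = ∑ j, A i j * x j := fun x i => rfl
  have hAvi : ∀ i, Tendsto (fun k => (A.mulVec (v (φ k))) i) atTop (𝓝 ((A.mulVec u) i)) := by
    intro i
    have hc : Continuous (fun x : m → ℝ => ∑ j, A i j * x j) :=
      continuous_finset_sum _ fun j _ => continuous_const.mul (continuous_apply j)
    have := (hc.tendsto u).comp hφtend
    simpa [hmv, Function.comp_def] using this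
  -- identity
  have hiden : ∀ k i, (A.mulVec (v k)) i = (r k)⁻¹ * (A.mulVec (z (k + 1))) i := by
    intro k i
    rw [hv]
    simp [Matrix.mulVec_smul, smul_eq_mul]
  -- q-terms
  have hqterm : ∀ i, Tendsto (fun k => (r (φ k))⁻¹ * q (φ k + 1) i) atTop (𝓝 0) := by
    intro i
    refine squeeze_zero_norm (fun k => ?_) (by simpa using hrinv.mul_const C)
    rw [Real.norm_eq_abs, abs_mul, abs_of_nonneg (hrinv_nonneg k)]
    exact mul_le_mul_of_nonneg_left
      (le_trans (norm_le_pi_norm (q (φ k + 1)) i) (hq _))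
      (hrinv_nonneg k)
  -- the crucial limits
  have hs : ∀ i, Tendsto (fun k => (A.mulVec (v (φ k))) i + (r (φ k))⁻¹ * q (φ k + 1) i)
      atTop (𝓝 ((A.mulVec u) i)) := by
    intro i
    simpa using (hAvi i).add (hqterm i)
  have hseq : ∀ k i, (A.mulVec (v k)) i + (r k)⁻¹ * q (k + 1) i
      = (r k)⁻¹ * (A.mulVec (z (k + 1)) + q (k + 1)) i := by
    intro k i
    rw [hiden k i]
    simp only [Pi.add_apply]
    ring
  obtain ⟨i, hi⟩ := hSP u hune
  by_cases hP : P i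
  · -- product is 0
    have hzero : ∀ k, v k i * ((A.mulVec (v k)) i + (r k)⁻¹ * q (k + 1) i) = 0 := by
      intro k
      rw [hseq k i]
      have hz0 : z (k+1) i * (A.mulVec (z (k+1)) + q (k+1)) i = 0 := (h1 (k+1) i hP).2
      have : v k i = (r k)⁻¹ * z (k + 1) i := by rw [hv]; simp [smul_eq_mul]
      rw [this]
      calc (r k)⁻¹ * z (k + 1) i * ((r k)⁻¹ * (A.mulVec (z (k + 1)) + q (k + 1)) i)
          = (r k)⁻¹ * (r k)⁻¹ * (z (k+1) i * (A.mulVec (z (k+1)) + q (k+1)) i) := by ring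
        _ = 0 := by rw [hz0]; ring
    have hlim : Tendsto (fun k => v (φ k) i *
        ((A.mulVec (v (φ k))) i + (r (φ k))⁻¹ * q (φ k + 1) i)) atTop
        (𝓝 (u i * (A.mulVec u) i)) := (hvi i).mul (hs i)
    have heq0 : (fun k => v (φ k) i *
        ((A.mulVec (v (φ k))) i + (r (φ k))⁻¹ * q (φ k + 1) i)) = fun _ => (0:ℝ) :=
      funext fun k => hzero (φ k)
    rw [heq0] at hlim
    have : u i * (A.mulVec u) i = 0 := tendsto_nhds_unique hlim tendsto_const_nhds
    rw [this] at hi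
    exact lt_irrefl 0 hi
  · -- (Au) i ≤ 0
    have hMlim : Tendsto (fun k => (r (φ k))⁻¹ * M) atTop (𝓝 0) := by
      simpa using hrinv.mul_const M
    have hle : ∀ k, (A.mulVec (v (φ k))) i + (r (φ k))⁻¹ * q (φ k + 1) i
        ≤ (r (φ k))⁻¹ * M := by
      intro k
      rw [hseq (φ k) i]
      exact mul_le_mul_of_nonneg_left (h2 (φ k + 1) i hP) (hrinv_nonneg k)
    have hAu_le : (A.mulVec u) i ≤ 0 := le_of_tendsto_of_tendsto' (hs i) hMlim hle
    have : u i * (A.mulVec u) i ≤ 0 := mul_nonpos_of_nonneg_of_nonpos (hu_nonneg i) hAu_le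
    linarith

lemma mulVec_continuous {m : Type*} [Fintype m] (A : Matrix m m ℝ) :
    Continuous fun x : m → ℝ => A.mulVec x := by
  refine continuous_pi fun i => ?_
  show Continuous fun x : m → ℝ => ∑ j, A i j * x j
  exact continuous_finset_sum _ fun j _ => continuous_const.mul (continuous_apply j)

lemma sol_continuous {m : Type*} [Fintype m] {A : Matrix m m ℝ} (hSP : SignP A)
    (hE : ∀ q, ∃ z, LCPSol A q z) :
    ∃ S : (m → ℝ) → (m → ℝ), Continuous S ∧ ∀ q, LCPSol A q (S q) := by
  classical
  choose S hS using hE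
  refine ⟨S, ?_, hS⟩
  rw [continuous_iff_seqContinuous]
  intro qs q hq
  -- bound on the q's
  obtain ⟨C, hC⟩ : ∃ C, ∀ k, ‖qs k‖ ≤ C := by
    obtain ⟨C, hC⟩ := hq.norm.bddAbove_range
    exact ⟨C, fun k => hC (Set.mem_range_self k)⟩
  -- bound on the z's
  have hzb : ∃ R, ∀ k, ‖S (qs k)‖ ≤ R := by
    by_contra hcon
    push_neg at hcon
    have hsel : ∀ j : ℕ, ∃ k, (j : ℝ) < ‖S (qs k)‖ := fun j => hcon j
    choose ψ hψ using hsel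
    exact noblow hSP C 0 (fun j => qs (ψ j)) (fun j => S (qs (ψ j))) (fun _ => True)
      (fun j => hC _) (fun j i => (hS _).1 i)
      (fun j i _ => ⟨(hS _).2.1 i, (hS _).2.2 i⟩)
      (fun j i hi => absurd trivial hi)
      (fun j => le_of_lt (hψ j))
  obtain ⟨R, hR⟩ := hzb
  -- convergence via subsequences
  apply tendsto_of_subseq_tendsto
  intro ns hns
  have hball : ∀ n, S (qs (ns n)) ∈ Metric.closedBall (0 : m → ℝ) (max R 0) := by
    intro n
    simp only [Metric.mem_closedBall, dist_zero_right]
    exact le_trans (hR _) (le_max_left _ _)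
  obtain ⟨zl, _, ms, hmsmono, hmstend⟩ :=
    tendsto_subseq_of_bounded (Metric.isBounded_closedBall (x := (0 : m → ℝ)) (r := max R 0))
      hball
  have hmstend' : Tendsto (fun n => S (qs (ns (ms n)))) atTop (𝓝 zl) := hmstend
  have hqtend : Tendsto (fun n => qs (ns (ms n))) atTop (𝓝 q) :=
    hq.comp (hns.comp hmsmono.tendsto_atTop)
  -- zl solves LCP(q)
  have hwtend : Tendsto (fun n => A.mulVec (S (qs (ns (ms n)))) + qs (ns (ms n)))
      atTop (𝓝 (A.mulVec zl + q)) :=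
    (((mulVec_continuous A).tendsto zl).comp hmstend').add hqtend
  have hcomp : ∀ (f : ℕ → m → ℝ) (g : m → ℝ), Tendsto f atTop (𝓝 g) →
      ∀ i, Tendsto (fun k => f k i) atTop (𝓝 (g i)) := fun f g h i =>
    ((continuous_apply i).tendsto g).comp h
  have hsol : LCPSol A q zl := by
    refine ⟨fun i => ge_of_tendsto' (hcomp _ _ hmstend' i) (fun n => (hS _).1 i),
      fun i => ge_of_tendsto' (hcomp _ _ hwtend i) (fun n => (hS _).2.1 i), fun i => ?_⟩
    have hlim : Tendsto (fun n => S (qs (ns (ms n))) i *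
        (A.mulVec (S (qs (ns (ms n)))) + qs (ns (ms n))) i) atTop
        (𝓝 (zl i * (A.mulVec zl + q) i)) :=
      (hcomp _ _ hmstend' i).mul (hcomp _ _ hwtend i)
    have hzero : (fun n => S (qs (ns (ms n))) i *
        (A.mulVec (S (qs (ns (ms n)))) + qs (ns (ms n))) i) = fun _ => (0:ℝ) :=
      funext fun n => (hS _).2.2 i
    rw [hzero] at hlim
    exact tendsto_nhds_unique hlim tendsto_const_nhds
  have : zl = S q := lcp_unique hSP hsol (hS q)
  exact ⟨ms, by rw [← this]; exact hmstend'⟩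

lemma lcp_exists : ∀ (n : ℕ) (A : Matrix (Fin n) (Fin n) ℝ), SignP A →
    ∀ q, ∃ z, LCPSol A q z := by
  intro n
  induction n with
  | zero =>
    intro A _ q
    exact ⟨0, fun i => i.elim0, fun i => i.elim0, fun i => i.elim0⟩
  | succ n IH =>
    intro A hSP q
    set Ab : Matrix (Fin n) (Fin n) ℝ := A.submatrix Fin.castSucc Fin.castSucc with hAb
    have hSPb : SignP Ab := by
      intro xb hxb
      set x : Fin (n+1) → ℝ := Fin.snoc xb 0 with hx
      have hxne : x ≠ 0 := by
        intro h
        apply hxb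
        funext j
        have := congrFun h (Fin.castSucc j)
        simpa [hx, Fin.snoc_castSucc] using this
      have hmv : ∀ j : Fin n, (A.mulVec x) (Fin.castSucc j) = (Ab.mulVec xb) j := by
        intro j
        show ∑ i, A (Fin.castSucc j) i * x i = ∑ k, Ab j k * xb k
        rw [Fin.sum_univ_castSucc]
        simp [hx, Fin.snoc_castSucc, Fin.snoc_last, hAb]
      obtain ⟨i, hi⟩ := hSP x hxne
      induction i using Fin.lastCases with
      | last =>
        rw [hx] at hi
        simp [Fin.snoc_last] at hi
      | cast j =>
        refine ⟨j, ?_⟩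
        rw [hmv j] at hi
        have hxj : x (Fin.castSucc j) = xb j := by rw [hx]; simp [Fin.snoc_castSucc]
        rwa [hxj] at hi
    obtain ⟨Sb, hScont, hSsol⟩ := sol_continuous hSPb (IH Ab hSPb)
    set qt : ℝ → Fin n → ℝ :=
      fun t j => q (Fin.castSucc j) + t * A (Fin.castSucc j) (Fin.last n) with hqt
    have hqtcont : Continuous qt := by
      refine continuous_pi fun j => ?_
      exact continuous_const.add (continuous_id.mul continuous_const)
    set zf : ℝ → Fin (n+1) → ℝ := fun t => Fin.snoc (Sb (qt t)) t with hzf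
    have hzf_cast : ∀ t (j : Fin n), zf t (Fin.castSucc j) = Sb (qt t) j := by
      intro t j; rw [hzf]; simp [Fin.snoc_castSucc]
    have hzf_last : ∀ t, zf t (Fin.last n) = t := by
      intro t; rw [hzf]; simp [Fin.snoc_last]
    have hw : ∀ t (j : Fin n), (A.mulVec (zf t) + q) (Fin.castSucc j)
        = (Ab.mulVec (Sb (qt t)) + qt t) j := by
      intro t j
      show (∑ i, A (Fin.castSucc j) i * zf t i) + q _
        = (∑ k, Ab j k * Sb (qt t) k) + qt t j
      rw [Fin.sum_univ_castSucc]
      simp only [hzf, Fin.snoc_castSucc, Fin.snoc_last, hAb, Matrix.submatrix_apply, hqt]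
      ring
    set g : ℝ → ℝ := fun t => (∑ j, A (Fin.last n) (Fin.castSucc j) * Sb (qt t) j)
        + A (Fin.last n) (Fin.last n) * t + q (Fin.last n) with hg
    have hgw : ∀ t, (A.mulVec (zf t) + q) (Fin.last n) = g t := by
      intro t
      show (∑ i, A (Fin.last n) i * zf t i) + q _ = _
      rw [Fin.sum_univ_castSucc]
      simp only [hzf, Fin.snoc_castSucc, Fin.snoc_last, hg]
    have hgcont : Continuous g := by
      refine Continuous.add (Continuous.add ?_ (continuous_const.mul continuous_id)) continuous_const
      exact continuous_finset_sum _ fun j _ =>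
        continuous_const.mul ((continuous_apply j).comp (hScont.comp hqtcont))
    have hz_nonneg : ∀ t : ℝ, 0 ≤ t → ∀ i, 0 ≤ zf t i := by
      intro t ht i
      induction i using Fin.lastCases with
      | last => rw [hzf_last]; exact ht
      | cast j => rw [hzf_cast]; exact (hSsol (qt t)).1 j
    have hT : ∃ T : ℝ, 0 ≤ T ∧ 0 ≤ g T := by
      by_contra hcon
      push_neg at hcon
      refine noblow hSP ‖q‖ 0 (fun _ => q) (fun k => zf k) (fun i => ¬ i = Fin.last n)
        (fun k => le_refl _) (fun k i => hz_nonneg k (Nat.cast_nonneg k) i) ?_ ?_ ?_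
      · intro k i hiP
        obtain ⟨j, rfl⟩ := Fin.exists_castSucc_eq.2 hiP
        rw [hw]
        refine ⟨(hSsol (qt ↑k)).2.1 j, ?_⟩
        show zf (k:ℝ) j.castSucc * _ = 0
        rw [hzf_cast]
        exact (hSsol (qt ↑k)).2.2 j
      · intro k i hiP
        rw [not_not] at hiP
        subst hiP
        rw [hgw]
        exact le_of_lt (hcon k (Nat.cast_nonneg k))
      · intro k
        calc (k : ℝ) = zf k (Fin.last n) := (hzf_last _).symm
          _ ≤ |zf k (Fin.last n)| := le_abs_self _
          _ ≤ ‖zf (k : ℝ)‖ := by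
              rw [← Real.norm_eq_abs]; exact norm_le_pi_norm _ _
    obtain ⟨T, hT0, hgT⟩ := hT
    have build : ∀ t : ℝ, 0 ≤ t → (t = 0 ∨ g t = 0) → 0 ≤ g t → LCPSol A q (zf t) := by
      intro t ht hcase hgt
      refine ⟨hz_nonneg t ht, ?_, ?_⟩
      · intro i
        induction i using Fin.lastCases with
        | last => rw [hgw]; exact hgt
        | cast j => rw [hw]; exact (hSsol (qt t)).2.1 j
      · intro i
        induction i using Fin.lastCases with
        | last =>
          rcases hcase with h0 | h0
          · rw [hzf_last, h0, zero_mul]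
          · rw [hgw, h0, mul_zero]
        | cast j =>
          rw [hw, hzf_cast]
          exact (hSsol (qt t)).2.2 j
    by_cases hg0 : 0 ≤ g 0
    · exact ⟨zf 0, build 0 le_rfl (Or.inl rfl) hg0⟩
    · push_neg at hg0
      have hmem : (0:ℝ) ∈ Set.Icc (g 0) (g T) := ⟨le_of_lt hg0, hgT⟩
      obtain ⟨t0, ht0mem, ht0⟩ := intermediate_value_Icc hT0 hgcont.continuousOn hmem
      exact ⟨zf t0, build t0 ht0mem.1 (Or.inr ht0) (le_of_eq ht0.symm)⟩

theorem stmt15 {n : ℕ} (A : Matrix (Fin n) (Fin n) ℝ) (hA : IsPMatrix A) :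
    ∀ q : Fin n → ℝ, ∃! z : Fin n → ℝ,
      (∀ i, 0 ≤ z i) ∧ (∀ i, 0 ≤ (A.mulVec z + q) i) ∧
      ∑ i, z i * (A.mulVec z + q) i = 0 := by
  intro q
  have hP : PMinors A := hA
  have hSP : SignP A := pminors_signP hP
  obtain ⟨z, hz⟩ := lcp_exists n A hSP q
  refine ⟨z, ⟨hz.1, hz.2.1, ?_⟩, ?_⟩
  · exact Finset.sum_eq_zero fun i _ => hz.2.2 i
  · rintro y ⟨hy1, hy2, hy3⟩
    have hy : LCPSol A q y := ⟨hy1, hy2, fun i =>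
      (Finset.sum_eq_zero_iff_of_nonneg
        (fun i _ => mul_nonneg (hy1 i) (hy2 i))).1 hy3 i (Finset.mem_univ i)⟩
    exact lcp_unique hSP hy hz
end
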